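/- arXiv:2208.00073 — 4 statements merged into one kernel-verified Lean document; each statement's English description precedes it below -/
import Mathlib

section
/- Geometric form of Proposition 5.1: For every integer n ≥ 2 and every sign function ε : {2, …, n} → {+1, −1}, there exist points Y₁, …, Y_{n+1} ∈ ℂ with Y₁ < Y₂ < ⋯ < Y_{n+1} in the given order, such that the n+1 points are, in a suitable cyclic order, the vertices of a positively convex (n+1)-gon, and for every 2 ≤ i ≤ n the real number Im( conj(Y_i − Y_{i−1}) · (Y_{i+1} − Y_i) ) is nonzero and has sign ε(i). (This realizes every orientation of the type A_n diagram as the intersection quiver of a stable (n+1)-gon.) -/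
noncomputable section

/-- The (strict) total order on `ℂ`: compare imaginary parts first, then real parts. -/
def cLt (a b : ℂ) : Prop := a.im < b.im ∨ (a.im = b.im ∧ a.re < b.re)

/-- The corresponding non-strict order on `ℂ`. -/
def cLe (a b : ℂ) : Prop := cLt a b ∨ a = b

/-- `cross u v = Im (conj u * v)`. -/
def cross (u v : ℂ) : ℝ := ((starRingEnd ℂ) u * v).im

/-- A positively convex `h`-gon: every other vertex lies strictly to the left of each
directed edge from `V (j-1)` to `V j`. -/
def PosConvex {h : ℕ} (V : ZMod h → ℂ) : Prop :=
  ∀ j i : ZMod h, i ≠ j - 1 → i ≠ j →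
    0 < cross (V j - V (j - 1)) (V i - V (j - 1))

/-- The (open) level-`s` diagonal-gon of an `h`-gon. -/
def DiagGon {h : ℕ} (V : ZMod h → ℂ) (s : ℕ) : Set ℂ :=
  {P : ℂ | ∀ j : ZMod h, 0 < cross (V (j + (s : ZMod h)) - V j) (P - V j)}

/-- Edge vectors of an `h`-gon. -/
def zEdge {h : ℕ} (V : ZMod h → ℂ) (j : ZMod h) : ℂ := V j - V (j - 1)

namespace TA

/-! ### Points on the unit circle, rational parametrization -/

def P (u : ℝ) : ℂ := ⟨(1 - u^2)/(1+u^2), 2*u/(1+u^2)⟩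

lemma cross_eq (u v : ℂ) : cross u v = u.re * v.im - u.im * v.re := by
  simp [cross, Complex.mul_im]; ring

lemma denom_pos (u : ℝ) : (0:ℝ) < 1 + u^2 := by positivity

lemma crossP (a b c : ℝ) :
    cross (P b - P a) (P c - P b) =
      ((b-a)*((c-b)*(c-a))) * (4 / ((1+a^2)*((1+b^2)*(1+c^2)))) := by
  have ha := denom_pos a; have hb := denom_pos b; have hc := denom_pos c
  simp only [cross_eq, P, Complex.sub_re, Complex.sub_im]
  field_simp
  ring

lemma crossP2 (a b c : ℝ) :
    cross (P b - P a) (P c - P a) =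
      ((b-a)*((c-b)*(c-a))) * (4 / ((1+a^2)*((1+b^2)*(1+c^2)))) := by
  have ha := denom_pos a; have hb := denom_pos b; have hc := denom_pos c
  simp only [cross_eq, P, Complex.sub_re, Complex.sub_im]
  field_simp
  ring

/-! ### Order/sign lemmas for the parametrization -/

lemma lt_of_lt_small {ta tb a b : ℝ} (h : ta < tb) (ha : 0 < a) (hb : 0 < b)
    (hab : a * b < 1) (ra : ta * (1 + a^2) = 2*a) (rb : tb * (1 + b^2) = 2*b) :
    a < b := by
  have h2 : 2*a*(1+b^2) < 2*b*(1+a^2) := by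
    nlinarith [mul_pos (by positivity : (0:ℝ) < 1+a^2) (by positivity : (0:ℝ) < 1+b^2)]
  nlinarith

lemma gt_of_lt_big {ta tb a b : ℝ} (h : ta < tb) (ha : 0 < a) (hb : 0 < b)
    (hab : 1 < a * b) (ra : ta * (1 + a^2) = 2*a) (rb : tb * (1 + b^2) = 2*b) :
    b < a := by
  have h2 : 2*a*(1+b^2) < 2*b*(1+a^2) := by
    nlinarith [mul_pos (by positivity : (0:ℝ) < 1+a^2) (by positivity : (0:ℝ) < 1+b^2)]
  nlinarith

lemma signs {ta tb tc a b c : ℝ}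
    (h1 : ta < tb) (h2 : tb < tc)
    (ha : 0 < a) (hb : 0 < b) (hc : 0 < c)
    (ra : ta * (1 + a^2) = 2*a) (rb : tb * (1 + b^2) = 2*b) (rc : tc * (1 + c^2) = 2*c)
    (da : a < 1 ∨ 1 < a) (dc : c < 1 ∨ 1 < c) :
    (b < 1 → 0 < (b-a)*((c-b)*(c-a))) ∧ (1 < b → (b-a)*((c-b)*(c-a)) < 0) := by
  have h13 : ta < tc := h1.trans h2
  constructor
  · intro hb1
    rcases da with da | da <;> rcases dc with dc | dc
    · have hab : a < b := lt_of_lt_small h1 ha hb (by nlinarith) ra rb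
      have hbc : b < c := lt_of_lt_small h2 hb hc (by nlinarith) rb rc
      exact mul_pos (by linarith) (mul_pos (by linarith) (by linarith))
    · have hab : a < b := lt_of_lt_small h1 ha hb (by nlinarith) ra rb
      exact mul_pos (by linarith) (mul_pos (by linarith) (by linarith))
    · have hbc : b < c := lt_of_lt_small h2 hb hc (by nlinarith) rb rc
      exact mul_pos_of_neg_of_neg (by linarith)
        (mul_neg_of_pos_of_neg (by linarith) (by linarith))
    · have hca : c < a := gt_of_lt_big h13 ha hc (by nlinarith) ra rc
      exact mul_pos_of_neg_of_neg (by linarith)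
        (mul_neg_of_pos_of_neg (by linarith) (by linarith))
  · intro hb1
    rcases da with da | da <;> rcases dc with dc | dc
    · have hac : a < c := lt_of_lt_small h13 ha hc (by nlinarith) ra rc
      exact mul_neg_of_pos_of_neg (by linarith)
        (mul_neg_of_neg_of_pos (by linarith) (by linarith))
    · have hcb : c < b := gt_of_lt_big h2 hb hc (by nlinarith) rb rc
      exact mul_neg_of_pos_of_neg (by linarith)
        (mul_neg_of_neg_of_pos (by linarith) (by linarith))
    · have hba : b < a := gt_of_lt_big h1 ha hb (by nlinarith) ra rb
      exact mul_neg_of_neg_of_pos (by linarith)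
        (mul_pos_of_neg_of_neg (by linarith) (by linarith))
    · have hba : b < a := gt_of_lt_big h1 ha hb (by nlinarith) ra rb
      have hcb : c < b := gt_of_lt_big h2 hb hc (by nlinarith) rb rc
      exact mul_neg_of_neg_of_pos (by linarith)
        (mul_pos_of_neg_of_neg (by linarith) (by linarith))

/-! ### The construction -/

variable (n : ℕ) (ε : ℕ → ℤ)

def tt (i : ℕ) : ℝ := (i : ℝ) / (n + 2)

def ss (i : ℕ) : ℝ := Real.sqrt (1 - tt n i ^ 2)

def uu (i : ℕ) : ℝ :=
  if 2 ≤ i ∧ i ≤ n ∧ ε i = -1 then (1 + ss n i) / tt n i else tt n i / (1 + ss n i)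

lemma tt_mono : StrictMono (tt n) := fun i j h => by
  have h2 : (0:ℝ) < (n:ℝ) + 2 := by positivity
  exact div_lt_div_of_pos_right (by exact_mod_cast h) h2

lemma tt_pos {i : ℕ} (h : 1 ≤ i) : 0 < tt n i := by
  have : (0:ℝ) < (i:ℝ) := by exact_mod_cast h
  exact div_pos this (by positivity)

lemma tt_lt_one {i : ℕ} (h : i ≤ n + 1) : tt n i < 1 := by
  rw [tt, div_lt_one (by positivity)]
  have : (i:ℝ) ≤ (n:ℝ) + 1 := by exact_mod_cast h
  linarith

lemma uu_key {i : ℕ} (h1 : 1 ≤ i) (h2 : i ≤ n + 1) :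
    0 < uu n ε i ∧ tt n i * (1 + (uu n ε i)^2) = 2 * uu n ε i ∧
      (if 2 ≤ i ∧ i ≤ n ∧ ε i = -1 then 1 < uu n ε i else uu n ε i < 1) := by
  have ht0 := tt_pos n h1
  have ht1 := tt_lt_one n h2
  have hs0 : 0 ≤ ss n i := Real.sqrt_nonneg _
  have hs2 : ss n i ^ 2 = 1 - tt n i ^ 2 := Real.sq_sqrt (by nlinarith)
  have hkey : (1 + ss n i)^2 + (tt n i)^2 = 2*(1 + ss n i) := by linear_combination hs2
  have hden : (0:ℝ) < 1 + ss n i := by linarith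
  have hts : tt n i < 1 + ss n i := by linarith
  rw [uu]
  split
  · refine ⟨div_pos hden ht0, ?_, ?_⟩
    · field_simp
      linear_combination hs2
    · rw [lt_div_iff₀ ht0]; linarith
  · refine ⟨div_pos ht0 hden, ?_, ?_⟩
    · field_simp
      linear_combination hkey
    · rw [div_lt_one hden]; linarith

lemma uu_dichot {i : ℕ} (h1 : 1 ≤ i) (h2 : i ≤ n + 1) :
    uu n ε i < 1 ∨ 1 < uu n ε i := by
  have := (uu_key n ε h1 h2).2.2
  split at this
  · exact Or.inr this
  · exact Or.inl this

lemma uu_inj {i j : ℕ} (hi1 : 1 ≤ i) (hi2 : i ≤ n + 1) (hj1 : 1 ≤ j) (hj2 : j ≤ n + 1)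
    (h : uu n ε i = uu n ε j) : i = j := by
  obtain ⟨hpi, hri, -⟩ := uu_key n ε hi1 hi2
  obtain ⟨hpj, hrj, -⟩ := uu_key n ε hj1 hj2
  rw [h] at hri
  have hteq : tt n i = tt n j := by
    have hd : (0:ℝ) < 1 + (uu n ε j)^2 := by positivity
    exact mul_right_cancel₀ (ne_of_gt hd) (hri.trans hrj.symm)
  rcases Nat.lt_trichotomy i j with hlt | heq | hgt
  · exact absurd hteq (ne_of_lt (tt_mono n hlt))
  · exact heq
  · exact absurd hteq.symm (ne_of_lt (tt_mono n hgt))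

def Y (i : ℕ) : ℂ := P (uu n ε i)

lemma im_Y {i : ℕ} (h1 : 1 ≤ i) (h2 : i ≤ n + 1) : (Y n ε i).im = tt n i := by
  obtain ⟨hp, hr, -⟩ := uu_key n ε h1 h2
  show 2 * uu n ε i / (1 + (uu n ε i)^2) = tt n i
  rw [div_eq_iff (ne_of_gt (denom_pos _))]
  linarith

end TA

/-- Geometric form of Proposition 5.1 (type `A_n`): for every `n ≥ 2` and every sign
function `ε` on `{2,…,n}` there are points `Y 1 < Y 2 < ⋯ < Y (n+1)` in `ℂ` which, in a
suitable cyclic order, are the vertices of a positively convex `(n+1)`-gon, and such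
that for `2 ≤ i ≤ n` the number `Im( conj (Y i − Y (i-1)) · (Y (i+1) − Y i) )` is nonzero
with sign `ε i`. -/
theorem typeA_realization (n : ℕ) (hn : 2 ≤ n) (ε : ℕ → ℤ)
    (hε : ∀ i, 2 ≤ i → i ≤ n → ε i = 1 ∨ ε i = -1) :
    ∃ Y : ℕ → ℂ,
      (∀ i j : ℕ, 1 ≤ i → i < j → j ≤ n + 1 → cLt (Y i) (Y j)) ∧
      (∃ V : ZMod (n + 1) → ℂ, PosConvex V ∧
        Set.range V = Y '' {i : ℕ | 1 ≤ i ∧ i ≤ n + 1}) ∧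
      (∀ i, 2 ≤ i → i ≤ n →
        0 < (ε i : ℝ) * cross (Y i - Y (i - 1)) (Y (i + 1) - Y i)) := by
  classical
  haveI : NeZero (n + 1) := ⟨n.succ_ne_zero⟩
  haveI : Fact (1 < n + 1) := ⟨by omega⟩
  refine ⟨TA.Y n ε, ?_, ?_, ?_⟩
  · -- the cLt chain
    intro i j hi hij hj
    left
    rw [TA.im_Y n ε hi (by omega), TA.im_Y n ε (by omega) hj]
    exact TA.tt_mono n hij
  · -- the convex polygon
    set S : Finset ℝ := (Finset.Icc 1 (n+1)).image (TA.uu n ε) with hS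
    have hcard : S.card = n + 1 := by
      rw [hS, Finset.card_image_of_injOn, Nat.card_Icc]
      · omega
      · intro i hi j hj h
        simp only [Finset.coe_Icc, Set.mem_Icc] at hi hj
        exact TA.uu_inj n ε hi.1 hi.2 hj.1 hj.2 h
    set f := S.orderEmbOfFin hcard with hf
    refine ⟨fun k => TA.P (f ⟨k.val, ZMod.val_lt k⟩), ?_, ?_⟩
    · -- PosConvex
      intro j i hij1 hij
      have hvne : ∀ a b : ZMod (n+1), a ≠ b → a.val ≠ b.val := by
        intro a b hab h
        exact hab (ZMod.val_injective _ h)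
      set va := (j - 1).val with hva
      set vb := j.val with hvb
      set vc := i.val with hvc
      have hclt : vc < n + 1 := ZMod.val_lt i
      have hblt : vb < n + 1 := ZMod.val_lt j
      have halt : va < n + 1 := ZMod.val_lt (j - 1)
      rw [TA.crossP2]
      have hpos : (0:ℝ) < 4 / ((1+(f ⟨va, halt⟩)^2)*((1+(f ⟨vb, hblt⟩)^2)*(1+(f ⟨vc, hclt⟩)^2))) := by
        have := TA.denom_pos (f ⟨va, halt⟩)
        have := TA.denom_pos (f ⟨vb, hblt⟩)
        have := TA.denom_pos (f ⟨vc, hclt⟩)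
        positivity
      refine mul_pos ?_ hpos
      have hmono : ∀ p q : Fin (n+1), p < q → f p < f q := fun p q h => f.strictMono h
      by_cases hj0 : j = 0
      · -- wrap-around edge
        have hva' : va = n := by
          rw [hva, hj0]
          show ((0 : ZMod (n+1)) - 1).val = n
          simp only [zero_sub]
          exact ZMod.val_neg_one n
        have hvb' : vb = 0 := by rw [hvb, hj0]; exact ZMod.val_zero
        have h1 : vc ≠ n := by rw [← hva']; exact hvne _ _ hij1
        have h2 : vc ≠ 0 := by rw [← hvb']; exact hvne _ _ hij
        have hcb : f ⟨vb, hblt⟩ < f ⟨vc, hclt⟩ := hmono _ _ (by rw [Fin.mk_lt_mk]; omega)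
        have hca : f ⟨vc, hclt⟩ < f ⟨va, halt⟩ := hmono _ _ (by rw [Fin.mk_lt_mk]; omega)
        exact mul_pos_of_neg_of_neg (by linarith)
          (mul_neg_of_pos_of_neg (by linarith) (by linarith))
      · -- ordinary edge
        have hb1 : 1 ≤ vb := by
          rcases Nat.eq_zero_or_pos vb with h | h
          · exact absurd (ZMod.val_injective _ (show j.val = (0 : ZMod (n+1)).val by
              rw [ZMod.val_zero, ← hvb]; exact h)) hj0
          · exact h
        have hsub : (j - 1).val = j.val - (1 : ZMod (n+1)).val :=
          ZMod.val_sub (by rw [ZMod.val_one]; rw [hvb] at hb1; exact hb1)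
        have hva' : va = vb - 1 := by
          rw [hva, hvb, hsub, ZMod.val_one]
        have hcna : vc ≠ va := hvne _ _ hij1
        have hcnb : vc ≠ vb := hvne _ _ hij
        have hab : f ⟨va, halt⟩ < f ⟨vb, hblt⟩ := hmono _ _ (by rw [Fin.mk_lt_mk]; omega)
        rcases Nat.lt_or_ge vc vb with hlt | hge
        · have hcva : vc < va := by omega
          have hca : f ⟨vc, hclt⟩ < f ⟨va, halt⟩ := hmono _ _ (by rw [Fin.mk_lt_mk]; omega)
          exact mul_pos (by linarith)
            (mul_pos_of_neg_of_neg (by linarith) (by linarith))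
        · have hbvc : vb < vc := by omega
          have hbc : f ⟨vb, hblt⟩ < f ⟨vc, hclt⟩ := hmono _ _ (by rw [Fin.mk_lt_mk]; omega)
          exact mul_pos (by linarith) (mul_pos (by linarith) (by linarith))
    · -- range equality
      have h1 : Set.range (fun k : ZMod (n+1) => (⟨k.val, ZMod.val_lt k⟩ : Fin (n+1)))
          = Set.univ := by
        rw [Set.eq_univ_iff_forall]
        intro m
        exact ⟨(m.val : ZMod (n+1)), by
          simp [Fin.ext_iff, ZMod.val_cast_of_lt m.isLt]⟩
      calc Set.range (fun k : ZMod (n+1) => TA.P (f ⟨k.val, ZMod.val_lt k⟩))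
          = TA.P '' (f '' Set.range (fun k : ZMod (n+1) => (⟨k.val, ZMod.val_lt k⟩ : Fin (n+1)))) := by
            rw [← Set.range_comp, ← Set.range_comp]; rfl
        _ = TA.P '' Set.range f := by rw [h1, Set.image_univ]
        _ = TA.P '' (S : Set ℝ) := by rw [Finset.range_orderEmbOfFin]
        _ = TA.P '' (TA.uu n ε '' (Set.Icc 1 (n+1))) := by
            rw [hS, Finset.coe_image, Finset.coe_Icc]
        _ = TA.Y n ε '' {i : ℕ | 1 ≤ i ∧ i ≤ n + 1} := by
            rw [Set.image_image]
            rfl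
  · -- sign condition
    intro i h2i hin
    have h1a : 1 ≤ i - 1 := by omega
    have h2a : i - 1 ≤ n + 1 := by omega
    obtain ⟨hpa, hra, -⟩ := TA.uu_key n ε h1a h2a
    obtain ⟨hpb, hrb, hifb⟩ := TA.uu_key n ε (i := i) (by omega) (by omega)
    obtain ⟨hpc, hrc, -⟩ := TA.uu_key n ε (i := i+1) (by omega) (by omega)
    have da := TA.uu_dichot n ε h1a h2a
    have dc := TA.uu_dichot n ε (i := i+1) (by omega) (by omega)
    have ht1 : TA.tt n (i-1) < TA.tt n i := TA.tt_mono n (by omega)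
    have ht2 : TA.tt n i < TA.tt n (i+1) := TA.tt_mono n (by omega)
    have hs := TA.signs ht1 ht2 hpa hpb hpc hra hrb hrc da dc
    rw [TA.Y, TA.Y, TA.Y, TA.crossP]
    have hpos : (0:ℝ) < 4 / ((1+(TA.uu n ε (i-1))^2)*((1+(TA.uu n ε i)^2)*(1+(TA.uu n ε (i+1))^2))) := by
      have := TA.denom_pos (TA.uu n ε (i-1))
      have := TA.denom_pos (TA.uu n ε i)
      have := TA.denom_pos (TA.uu n ε (i+1))
      positivity
    rcases hε i h2i hin with he | he
    · rw [if_neg (by rintro ⟨-, -, h⟩; omega)] at hifb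
      have hprod := hs.1 hifb
      rw [he]
      push_cast
      rw [one_mul]
      exact mul_pos hprod hpos
    · rw [if_pos ⟨h2i, hin, he⟩] at hifb
      have hprod := hs.2 hifb
      rw [he]
      push_cast
      nlinarith [mul_neg_of_neg_of_pos hprod hpos]
end
end

section
/- Geometric form of Proposition 5.4 for E₆: For every sign function ε on the five edges (1,2), (2,4), (3,4), (4,5), (5,6) of the E₆ diagram with values in {+1, −1}, there exists a stable 12-gon of type E6 with the following properties (after cyclic relabeling of indices): V₁, V₂, V₃ are smaller, in the order on ℂ, than all other points of {V_j} ∪ {W_j}; W₁ ≠ W₄, and letting △₊ = {V₀, W₁, W₃} if W₁ < W₄ and △₊ = {W₂, W₄, V₄} if W₄ < W₁, the six points {V₁, V₂, V₃} ∪ △₊ are pairwise distinct and form a positively convex hexagon in a suitable cyclic order; listing these six points increasingly as P₁ < P₂ < ⋯ < P₆ and setting s₁ := P₂ − P₁, s₂ := P₃ − P₂, s₄ := P₄ − P₃, s₅ := P₅ − P₄, s₆ := P₆ − P₅, and s₃ := W₂ − V₀ if V₀ < W₂ and s₃ := V₀ − W₂ otherwise, then for each edge (a,b) among (1,2), (2,4),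 (3,4), (4,5), (5,6), the number Im( conj(s_a) · s_b ) is nonzero with sign ε(a,b). -/
noncomputable section

/-- A 12-gon of type E6: the edge vectors satisfy the two families of linear relations. -/
def IsE6Gon (V : ZMod 12 → ℂ) : Prop :=
  ∀ j : ZMod 12,
    zEdge V j + zEdge V (j + 4) + zEdge V (j + 8) = 0 ∧
    zEdge V j - zEdge V (j - 3) + zEdge V (j - 6) - zEdge V (j - 9) = 0

/-- The inner points `W j` of a 12-gon of type E6. -/
def WE6 (V : ZMod 12 → ℂ) (j : ZMod 12) : ℂ := V j + zEdge V (j + 4)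

/-- A stable 12-gon of type E6. -/
def IsStableE6Gon (V : ZMod 12 → ℂ) : Prop :=
  IsE6Gon V ∧ PosConvex V ∧ ∀ j : ZMod 12, WE6 V j ∈ DiagGon V 3

/- ### Integer-level framework -/

abbrev Pt : Type := ℤ × ℤ

def cpt (p : Pt) : ℂ := ⟨(p.1 : ℝ), (p.2 : ℝ)⟩

abbrev crZ (u v : Pt) : ℤ := u.1 * v.2 - u.2 * v.1

abbrev zLt (a b : Pt) : Prop := a.2 < b.2 ∨ (a.2 = b.2 ∧ a.1 < b.1)

abbrev wz (v : ZMod 12 → Pt) (j : ZMod 12) : Pt := v j + (v (j + 4) - v (j + 4 - 1))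

abbrev PosConvexZ {h : ℕ} (v : ZMod h → Pt) : Prop :=
  ∀ j i : ZMod h, i ≠ j - 1 → i ≠ j → 0 < crZ (v j - v (j - 1)) (v i - v (j - 1))

def GoodZ (v : ZMod 12 → Pt) (p : Fin 6 → Pt) (u : ZMod 6 → Pt) (s3 : Pt)
    (e12 e24 e34 e45 e56 : ℤ) : Prop :=
  (∀ j : ZMod 12,
      (v j - v (j - 1)) + (v (j + 4) - v (j + 4 - 1)) + (v (j + 8) - v (j + 8 - 1)) = 0 ∧
      (v j - v (j - 1)) - (v (j - 3) - v (j - 3 - 1)) + (v (j - 6) - v (j - 6 - 1))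
        - (v (j - 9) - v (j - 9 - 1)) = 0) ∧
  PosConvexZ v ∧
  (∀ j k : ZMod 12, 0 < crZ (v (k + 3) - v k) (wz v j - v k)) ∧
  (∀ t : ZMod 12, (t = 1 ∨ t = 2 ∨ t = 3) →
      (∀ k : ZMod 12, zLt (v t) (wz v k)) ∧
      (∀ i : ZMod 12, ¬(i = 1 ∨ i = 2 ∨ i = 3) → zLt (v t) (v i))) ∧
  wz v 1 ≠ wz v 4 ∧
  (∀ i j : Fin 6, i < j → zLt (p i) (p j)) ∧
  ((zLt (wz v 1) (wz v 4) ∧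
      Finset.image p Finset.univ = ({v 1, v 2, v 3, v 0, wz v 1, wz v 3} : Finset Pt)) ∨
   (zLt (wz v 4) (wz v 1) ∧
      Finset.image p Finset.univ = ({v 1, v 2, v 3, wz v 2, wz v 4, v 4} : Finset Pt))) ∧
  PosConvexZ u ∧
  Finset.image u Finset.univ = Finset.image p Finset.univ ∧
  ((zLt (v 0) (wz v 2) ∧ s3 = wz v 2 - v 0) ∨ (¬ zLt (v 0) (wz v 2) ∧ s3 = v 0 - wz v 2)) ∧
  0 < e12 * crZ (p 1 - p 0) (p 2 - p 1) ∧
  0 < e24 * crZ (p 2 - p 1) (p 3 - p 2) ∧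
  0 < e34 * crZ s3 (p 3 - p 2) ∧
  0 < e45 * crZ (p 3 - p 2) (p 4 - p 3) ∧
  0 < e56 * crZ (p 4 - p 3) (p 5 - p 4)

set_option maxHeartbeats 1000000 in
instance GoodZ.instDecidable (v : ZMod 12 → Pt) (p : Fin 6 → Pt) (u : ZMod 6 → Pt) (s3 : Pt)
    (e12 e24 e34 e45 e56 : ℤ) : Decidable (GoodZ v p u s3 e12 e24 e34 e45 e56) := by
  unfold GoodZ
  repeat' refine instDecidableAnd (dp := ?_) (dq := ?_)
  all_goals infer_instance

lemma cpt_add (a b : Pt) : cpt (a + b) = cpt a + cpt b := by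
  simp [cpt, Complex.ext_iff, Prod.fst_add, Prod.snd_add]

lemma cpt_sub (a b : Pt) : cpt (a - b) = cpt a - cpt b := by
  simp [cpt, Complex.ext_iff, Prod.fst_sub, Prod.snd_sub]

lemma cpt_zero : cpt 0 = 0 := by
  simp [cpt, Complex.ext_iff]

lemma cpt_inj {a b : Pt} (h : cpt a = cpt b) : a = b := by
  simp only [cpt, Complex.ext_iff, Int.cast_inj] at h
  exact Prod.ext h.1 h.2

lemma cross_cpt (a b : Pt) : cross (cpt a) (cpt b) = (crZ a b : ℝ) := by
  simp [cross, cpt, crZ, Complex.mul_im]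
  ring

lemma pos_cross {a b : Pt} (h : 0 < crZ a b) : 0 < cross (cpt a) (cpt b) := by
  rw [cross_cpt]; exact_mod_cast h

lemma cLt_cpt {a b : Pt} : cLt (cpt a) (cpt b) ↔ zLt a b := by
  simp [cLt, zLt, cpt]

lemma posConvex_of_Z {h : ℕ} (v : ZMod h → Pt) (hv : PosConvexZ v) :
    PosConvex (fun j => cpt (v j)) := by
  intro j i h1 h2
  have := pos_cross (hv j i h1 h2)
  rwa [cpt_sub, cpt_sub] at this

lemma WE6_cpt (v : ZMod 12 → Pt) (j : ZMod 12) :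
    WE6 (fun k => cpt (v k)) j = cpt (wz v j) := by
  simp [WE6, zEdge, wz, cpt_add, cpt_sub]

lemma union6 {α : Type*} (a b c d e f : α) :
    ({a, b, c} : Set α) ∪ {d, e, f} = {a, b, c, d, e, f} := by
  ext x
  simp only [Set.mem_union, Set.mem_insert_iff, Set.mem_singleton_iff, or_assoc]

lemma range_eq_of_image {ι : Type*} [Fintype ι] (f : ι → Pt) (S : Finset Pt)
    (h : Finset.image f Finset.univ = S) :
    Set.range (fun i => cpt (f i)) = cpt '' ↑S := by
  subst h
  ext x
  simp only [Set.mem_range, Finset.coe_image, Finset.coe_univ, Set.image_univ,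
    Set.mem_image, Set.mem_range]
  constructor
  · rintro ⟨i, rfl⟩; exact ⟨f i, ⟨i, rfl⟩, rfl⟩
  · rintro ⟨a, ⟨i, rfl⟩, rfl⟩; exact ⟨i, rfl⟩

theorem key_bridge (v : ZMod 12 → Pt) (p : Fin 6 → Pt) (u : ZMod 6 → Pt) (s3 : Pt)
    (e12 e24 e34 e45 e56 : ℤ)
    (hg : GoodZ v p u s3 e12 e24 e34 e45 e56) :
    ∃ V : ZMod 12 → ℂ, IsStableE6Gon V ∧
      (∀ t : ZMod 12, t ∈ ({1, 2, 3} : Set (ZMod 12)) →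
        (∀ k : ZMod 12, cLt (V t) (WE6 V k)) ∧
        (∀ i : ZMod 12, i ∉ ({1, 2, 3} : Set (ZMod 12)) → cLt (V t) (V i))) ∧
      WE6 V 1 ≠ WE6 V 4 ∧
      ∃ T : Set ℂ,
        ((cLt (WE6 V 1) (WE6 V 4) ∧ T = {V 0, WE6 V 1, WE6 V 3}) ∨
         (cLt (WE6 V 4) (WE6 V 1) ∧ T = {WE6 V 2, WE6 V 4, V 4})) ∧
        ∃ P : Fin 6 → ℂ,
          (∀ i j : Fin 6, i < j → cLt (P i) (P j)) ∧
          Set.range P = ({V 1, V 2, V 3} : Set ℂ) ∪ T ∧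
          (∃ U : ZMod 6 → ℂ, PosConvex U ∧ Set.range U = Set.range P) ∧
          ∃ s3 : ℂ,
            ((cLt (V 0) (WE6 V 2) ∧ s3 = WE6 V 2 - V 0) ∨
             (¬ cLt (V 0) (WE6 V 2) ∧ s3 = V 0 - WE6 V 2)) ∧
            0 < (e12 : ℝ) * cross (P 1 - P 0) (P 2 - P 1) ∧
            0 < (e24 : ℝ) * cross (P 2 - P 1) (P 3 - P 2) ∧
            0 < (e34 : ℝ) * cross s3 (P 3 - P 2) ∧
            0 < (e45 : ℝ) * cross (P 3 - P 2) (P 4 - P 3) ∧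
            0 < (e56 : ℝ) * cross (P 4 - P 3) (P 5 - P 4) := by
  unfold GoodZ at hg
  obtain ⟨hrel, hpc, hdiag, hord, hw14, hsort, hbr, hpcu, hru, hs3, h1, h2, h3, h4, h5⟩ := hg
  refine ⟨fun j => cpt (v j), ⟨?_, posConvex_of_Z v hpc, ?_⟩, ?_, ?_, ?_⟩
  · -- IsE6Gon
    intro j
    constructor
    · simpa [zEdge, cpt_add, cpt_sub, cpt_zero] using congrArg cpt (hrel j).1
    · simpa [zEdge, cpt_add, cpt_sub, cpt_zero] using congrArg cpt (hrel j).2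
  · -- DiagGon
    intro j
    intro k
    have := pos_cross (hdiag j k)
    rw [cpt_sub, cpt_sub] at this
    rw [WE6_cpt]
    simpa using this
  · -- ordering
    intro t ht
    have ht' : t = 1 ∨ t = 2 ∨ t = 3 := by simpa using ht
    obtain ⟨hA, hB⟩ := hord t ht'
    refine ⟨fun k => ?_, fun i hi => ?_⟩
    · rw [WE6_cpt]; exact cLt_cpt.2 (hA k)
    · have hi' : ¬(i = 1 ∨ i = 2 ∨ i = 3) := by simpa using hi
      exact cLt_cpt.2 (hB i hi')
  · -- W1 ≠ W4
    rw [WE6_cpt, WE6_cpt]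
    exact fun h => hw14 (cpt_inj h)
  · -- main existentials
    rcases hbr with ⟨hlt, himg⟩ | ⟨hlt, himg⟩
    · refine ⟨{cpt (v 0), WE6 (fun k => cpt (v k)) 1, WE6 (fun k => cpt (v k)) 3},
        Or.inl ⟨by rw [WE6_cpt, WE6_cpt]; exact cLt_cpt.2 hlt, rfl⟩,
        fun i => cpt (p i), fun i j hij => cLt_cpt.2 (hsort i j hij), ?_, ?_, ?_⟩
      · rw [WE6_cpt, WE6_cpt, union6, range_eq_of_image p _ himg]
        simp only [Finset.coe_insert, Finset.coe_singleton, Set.image_insert_eq,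
          Set.image_singleton]
      · exact ⟨fun j => cpt (u j), posConvex_of_Z u hpcu,
          by rw [range_eq_of_image u _ hru, range_eq_of_image p _ rfl]⟩
      · refine ⟨cpt s3, ?_, ?_, ?_, ?_, ?_, ?_⟩
        · rcases hs3 with ⟨hc, he⟩ | ⟨hc, he⟩
          · exact Or.inl ⟨by rw [WE6_cpt]; exact cLt_cpt.2 hc,
              by rw [he, cpt_sub, WE6_cpt]⟩
          · exact Or.inr ⟨by rw [WE6_cpt]; exact fun hx => hc (cLt_cpt.1 hx),
              by rw [he, cpt_sub, WE6_cpt]⟩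
        · rw [← cpt_sub, ← cpt_sub, cross_cpt]; exact_mod_cast h1
        · rw [← cpt_sub, ← cpt_sub, cross_cpt]; exact_mod_cast h2
        · rw [← cpt_sub, cross_cpt]; exact_mod_cast h3
        · rw [← cpt_sub, ← cpt_sub, cross_cpt]; exact_mod_cast h4
        · rw [← cpt_sub, ← cpt_sub, cross_cpt]; exact_mod_cast h5
    · refine ⟨{WE6 (fun k => cpt (v k)) 2, WE6 (fun k => cpt (v k)) 4, cpt (v 4)},
        Or.inr ⟨by rw [WE6_cpt, WE6_cpt]; exact cLt_cpt.2 hlt, rfl⟩,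
        fun i => cpt (p i), fun i j hij => cLt_cpt.2 (hsort i j hij), ?_, ?_, ?_⟩
      · rw [WE6_cpt, WE6_cpt, union6, range_eq_of_image p _ himg]
        simp only [Finset.coe_insert, Finset.coe_singleton, Set.image_insert_eq,
          Set.image_singleton]
      · exact ⟨fun j => cpt (u j), posConvex_of_Z u hpcu,
          by rw [range_eq_of_image u _ hru, range_eq_of_image p _ rfl]⟩
      · refine ⟨cpt s3, ?_, ?_, ?_, ?_, ?_, ?_⟩
        · rcases hs3 with ⟨hc, he⟩ | ⟨hc, he⟩
          · exact Or.inl ⟨by rw [WE6_cpt]; exact cLt_cpt.2 hc,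
              by rw [he, cpt_sub, WE6_cpt]⟩
          · exact Or.inr ⟨by rw [WE6_cpt]; exact fun hx => hc (cLt_cpt.1 hx),
              by rw [he, cpt_sub, WE6_cpt]⟩
        · rw [← cpt_sub, ← cpt_sub, cross_cpt]; exact_mod_cast h1
        · rw [← cpt_sub, ← cpt_sub, cross_cpt]; exact_mod_cast h2
        · rw [← cpt_sub, cross_cpt]; exact_mod_cast h3
        · rw [← cpt_sub, ← cpt_sub, cross_cpt]; exact_mod_cast h4
        · rw [← cpt_sub, ← cpt_sub, cross_cpt]; exact_mod_cast h5

set_option maxHeartbeats 1000000 in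
/-- Geometric form of Proposition 5.4 for `E₆`: every sign function on the five edges
`(1,2), (2,4), (3,4), (4,5), (5,6)` of the `E₆` diagram is realized by a stable 12-gon of
type `E6` (after cyclic relabeling). -/
theorem typeE6_realization (e12 e24 e34 e45 e56 : ℤ)
    (h12 : e12 = 1 ∨ e12 = -1) (h24 : e24 = 1 ∨ e24 = -1) (h34 : e34 = 1 ∨ e34 = -1)
    (h45 : e45 = 1 ∨ e45 = -1) (h56 : e56 = 1 ∨ e56 = -1) :
    ∃ V : ZMod 12 → ℂ, IsStableE6Gon V ∧
      (∀ t : ZMod 12, t ∈ ({1, 2, 3} : Set (ZMod 12)) →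
        (∀ k : ZMod 12, cLt (V t) (WE6 V k)) ∧
        (∀ i : ZMod 12, i ∉ ({1, 2, 3} : Set (ZMod 12)) → cLt (V t) (V i))) ∧
      WE6 V 1 ≠ WE6 V 4 ∧
      ∃ T : Set ℂ,
        ((cLt (WE6 V 1) (WE6 V 4) ∧ T = {V 0, WE6 V 1, WE6 V 3}) ∨
         (cLt (WE6 V 4) (WE6 V 1) ∧ T = {WE6 V 2, WE6 V 4, V 4})) ∧
        ∃ P : Fin 6 → ℂ,
          (∀ i j : Fin 6, i < j → cLt (P i) (P j)) ∧
          Set.range P = ({V 1, V 2, V 3} : Set ℂ) ∪ T ∧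
          (∃ U : ZMod 6 → ℂ, PosConvex U ∧ Set.range U = Set.range P) ∧
          ∃ s3 : ℂ,
            ((cLt (V 0) (WE6 V 2) ∧ s3 = WE6 V 2 - V 0) ∨
             (¬ cLt (V 0) (WE6 V 2) ∧ s3 = V 0 - WE6 V 2)) ∧
            0 < (e12 : ℝ) * cross (P 1 - P 0) (P 2 - P 1) ∧
            0 < (e24 : ℝ) * cross (P 2 - P 1) (P 3 - P 2) ∧
            0 < (e34 : ℝ) * cross s3 (P 3 - P 2) ∧
            0 < (e45 : ℝ) * cross (P 3 - P 2) (P 4 - P 3) ∧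
            0 < (e56 : ℝ) * cross (P 4 - P 3) (P 5 - P 4) := by
  rcases h12 with rfl | rfl <;> rcases h24 with rfl | rfl <;> rcases h34 with rfl | rfl <;>
    rcases h45 with rfl | rfl <;> rcases h56 with rfl | rfl
  · exact key_bridge ![((0 : ℤ), (0 : ℤ)), ((14 : ℤ), (-14 : ℤ)), ((34 : ℤ), (-14 : ℤ)), ((53 : ℤ), (-9 : ℤ)), ((68 : ℤ), (-2 : ℤ)), ((73 : ℤ), (11 : ℤ)), ((67 : ℤ), (26 : ℤ)), ((54 : ℤ), (32 : ℤ)), ((33 : ℤ), (34 : ℤ)), ((14 : ℤ), (35 : ℤ)), ((0 : ℤ), (20 : ℤ)), ((-6 : ℤ), (9 : ℤ))] ![((14 : ℤ), (-14 : ℤ)), ((34 : ℤ), (-14 : ℤ)), ((53 : ℤ), (-9 : ℤ)), ((40 : ℤ), (-3 : ℤ)), ((19 : ℤ), (-1 : ℤ)), ((0 : ℤ), (0 : ℤ))] ![((14 : ℤ), (-14 : ℤ)), ((34 : ℤ), (-14 : ℤ)), ((53 : ℤ), (-9 : ℤ)), ((40 : ℤ), (-3 : ℤ)), ((19 : ℤ),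 (-1 : ℤ)), ((0 : ℤ), (0 : ℤ))] ((28 : ℤ), (1 : ℤ)) _ _ _ _ _ (of_decide_eq_true (inst := GoodZ.instDecidable ..) (by decide +kernel))
  · exact key_bridge ![((0 : ℤ), (0 : ℤ)), ((9 : ℤ), (-12 : ℤ)), ((32 : ℤ), (-11 : ℤ)), ((46 : ℤ), (-8 : ℤ)), ((56 : ℤ), (2 : ℤ)), ((60 : ℤ), (17 : ℤ)), ((53 : ℤ), (31 : ℤ)), ((38 : ℤ), (38 : ℤ)), ((20 : ℤ), (42 : ℤ)), ((7 : ℤ), (39 : ℤ)), ((-9 : ℤ), (24 : ℤ)), ((-8 : ℤ), (14 : ℤ))] ![((9 : ℤ), (-12 : ℤ)), ((32 : ℤ), (-11 : ℤ)), ((46 : ℤ), (-8 : ℤ)), ((31 : ℤ), (-1 : ℤ)), ((0 : ℤ), (0 : ℤ)), ((13 : ℤ), (3 : ℤ))] ![((9 : ℤ), (-12 : ℤ)), ((32 : ℤ), (-11 : ℤ)), ((46 : ℤ), (-8 : ℤ)), ((31 : ℤ), (-1 : ℤ)), ((13 : ℤ), (3 : ℤ)), ((0 : ℤ), (0 : ℤ))]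 ((25 : ℤ), (3 : ℤ)) _ _ _ _ _ (of_decide_eq_true (inst := GoodZ.instDecidable ..) (by decide +kernel))
  · exact key_bridge ![((0 : ℤ), (0 : ℤ)), ((16 : ℤ), (-12 : ℤ)), ((31 : ℤ), (-12 : ℤ)), ((45 : ℤ), (-8 : ℤ)), ((61 : ℤ), (5 : ℤ)), ((60 : ℤ), (23 : ℤ)), ((58 : ℤ), (37 : ℤ)), ((45 : ℤ), (48 : ℤ)), ((28 : ℤ), (51 : ℤ)), ((13 : ℤ), (45 : ℤ)), ((0 : ℤ), (31 : ℤ)), ((-1 : ℤ), (16 : ℤ))] ![((16 : ℤ), (-12 : ℤ)), ((31 : ℤ), (-12 : ℤ)), ((45 : ℤ), (-8 : ℤ)), ((0 : ℤ), (0 : ℤ)), ((32 : ℤ), (3 : ℤ)), ((15 : ℤ), (6 : ℤ))] ![((16 : ℤ), (-12 : ℤ)), ((31 : ℤ), (-12 : ℤ)), ((45 : ℤ), (-8 : ℤ)), ((32 : ℤ), (3 : ℤ)), ((15 : ℤ), (6 : ℤ)), ((0 : ℤ), (0 : ℤ))] ((29 : ℤ), (2 : ℤ)) _ _ _ _ _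 (of_decide_eq_true (inst := GoodZ.instDecidable ..) (by decide +kernel))
  · exact key_bridge ![((0 : ℤ), (0 : ℤ)), ((12 : ℤ), (-22 : ℤ)), ((40 : ℤ), (-21 : ℤ)), ((77 : ℤ), (-1 : ℤ)), ((91 : ℤ), (24 : ℤ)), ((108 : ℤ), (58 : ℤ)), ((107 : ℤ), (89 : ℤ)), ((82 : ℤ), (104 : ℤ)), ((59 : ℤ), (102 : ℤ)), ((30 : ℤ), (90 : ℤ)), ((3 : ℤ), (58 : ℤ)), ((-9 : ℤ), (23 : ℤ))] ![((12 : ℤ), (-22 : ℤ)), ((40 : ℤ), (-21 : ℤ)), ((77 : ℤ), (-1 : ℤ)), ((0 : ℤ), (0 : ℤ)), ((29 : ℤ), (12 : ℤ)), ((52 : ℤ), (14 : ℤ))] ![((12 : ℤ), (-22 : ℤ)), ((40 : ℤ), (-21 : ℤ)), ((77 : ℤ), (-1 : ℤ)), ((52 : ℤ), (14 : ℤ)), ((29 : ℤ), (12 : ℤ)), ((0 : ℤ), (0 : ℤ))] ((39 : ℤ), (10 : ℤ)) _ _ _ _ _ (of_decide_eq_true (inst := GoodZ.instDecidable ..) (by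 decide +kernel))
  · exact key_bridge ![((0 : ℤ), (0 : ℤ)), ((22 : ℤ), (-23 : ℤ)), ((37 : ℤ), (-22 : ℤ)), ((55 : ℤ), (-20 : ℤ)), ((69 : ℤ), (-17 : ℤ)), ((67 : ℤ), (5 : ℤ)), ((58 : ℤ), (19 : ℤ)), ((44 : ℤ), (30 : ℤ)), ((23 : ℤ), (38 : ℤ)), ((3 : ℤ), (39 : ℤ)), ((-3 : ℤ), (24 : ℤ)), ((-7 : ℤ), (11 : ℤ))] ![((22 : ℤ), (-23 : ℤ)), ((37 : ℤ), (-22 : ℤ)), ((55 : ℤ), (-20 : ℤ)), ((69 : ℤ), (-17 : ℤ)), ((48 : ℤ), (-9 : ℤ)), ((28 : ℤ), (-8 : ℤ))] ![((22 : ℤ), (-23 : ℤ)), ((37 : ℤ), (-22 : ℤ)), ((55 : ℤ), (-20 : ℤ)), ((69 : ℤ), (-17 : ℤ)), ((48 : ℤ), (-9 : ℤ)), ((28 : ℤ), (-8 : ℤ))] ((-28 : ℤ), (8 : ℤ)) _ _ _ _ _ (of_decide_eq_true (inst := GoodZ.instDecidable ..) (by decide +kernel))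
  · exact key_bridge ![((0 : ℤ), (0 : ℤ)), ((24 : ℤ), (-34 : ℤ)), ((51 : ℤ), (-32 : ℤ)), ((87 : ℤ), (-27 : ℤ)), ((109 : ℤ), (-8 : ℤ)), ((113 : ℤ), (29 : ℤ)), ((111 : ℤ), (54 : ℤ)), ((84 : ℤ), (80 : ℤ)), ((52 : ℤ), (84 : ℤ)), ((24 : ℤ), (81 : ℤ)), ((-1 : ℤ), (54 : ℤ)), ((-10 : ℤ), (23 : ℤ))] ![((24 : ℤ), (-34 : ℤ)), ((51 : ℤ), (-32 : ℤ)), ((87 : ℤ), (-27 : ℤ)), ((109 : ℤ), (-8 : ℤ)), ((49 : ℤ), (-7 : ℤ)), ((77 : ℤ), (-4 : ℤ))] ![((24 : ℤ), (-34 : ℤ)), ((51 : ℤ), (-32 : ℤ)), ((87 : ℤ), (-27 : ℤ)), ((109 : ℤ), (-8 : ℤ)), ((77 : ℤ), (-4 : ℤ)), ((49 : ℤ), (-7 : ℤ))] ((-49 : ℤ), (7 : ℤ)) _ _ _ _ _ (of_decide_eq_true (inst := GoodZ.instDecidable ..) (by decide +kernel))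
  · exact key_bridge ![((0 : ℤ), (0 : ℤ)), ((9 : ℤ), (-16 : ℤ)), ((24 : ℤ), (-16 : ℤ)), ((40 : ℤ), (-11 : ℤ)), ((52 : ℤ), (-2 : ℤ)), ((59 : ℤ), (21 : ℤ)), ((56 : ℤ), (34 : ℤ)), ((47 : ℤ), (46 : ℤ)), ((32 : ℤ), (52 : ℤ)), ((16 : ℤ), (45 : ℤ)), ((4 : ℤ), (32 : ℤ)), ((-3 : ℤ), (15 : ℤ))] ![((9 : ℤ), (-16 : ℤ)), ((24 : ℤ), (-16 : ℤ)), ((40 : ℤ), (-11 : ℤ)), ((21 : ℤ), (-3 : ℤ)), ((52 : ℤ), (-2 : ℤ)), ((37 : ℤ), (4 : ℤ))] ![((9 : ℤ), (-16 : ℤ)), ((24 : ℤ), (-16 : ℤ)), ((40 : ℤ), (-11 : ℤ)), ((52 : ℤ), (-2 : ℤ)), ((37 : ℤ), (4 : ℤ)), ((21 : ℤ), (-3 : ℤ))] ((-21 : ℤ), (3 : ℤ)) _ _ _ _ _ (of_decide_eq_true (inst := GoodZ.instDecidable ..) (by decide +kernel))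
  · exact key_bridge ![((0 : ℤ), (0 : ℤ)), ((14 : ℤ), (-34 : ℤ)), ((40 : ℤ), (-29 : ℤ)), ((66 : ℤ), (-22 : ℤ)), ((86 : ℤ), (7 : ℤ)), ((92 : ℤ), (48 : ℤ)), ((87 : ℤ), (76 : ℤ)), ((72 : ℤ), (106 : ℤ)), ((41 : ℤ), (105 : ℤ)), ((21 : ℤ), (98 : ℤ)), ((0 : ℤ), (65 : ℤ)), ((-11 : ℤ), (28 : ℤ))] ![((14 : ℤ), (-34 : ℤ)), ((40 : ℤ), (-29 : ℤ)), ((66 : ℤ), (-22 : ℤ)), ((35 : ℤ), (-1 : ℤ)), ((55 : ℤ), (6 : ℤ)), ((86 : ℤ), (7 : ℤ))] ![((14 : ℤ), (-34 : ℤ)), ((40 : ℤ), (-29 : ℤ)), ((66 : ℤ), (-22 : ℤ)), ((86 : ℤ), (7 : ℤ)), ((55 : ℤ), (6 : ℤ)), ((35 : ℤ), (-1 : ℤ))] ((-35 : ℤ), (1 : ℤ)) _ _ _ _ _ (of_decide_eq_true (inst := GoodZ.instDecidable ..) (by decide +kernel))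
  · exact key_bridge ![((0 : ℤ), (0 : ℤ)), ((46 : ℤ), (-38 : ℤ)), ((131 : ℤ), (-68 : ℤ)), ((181 : ℤ), (-57 : ℤ)), ((243 : ℤ), (-9 : ℤ)), ((257 : ℤ), (26 : ℤ)), ((229 : ℤ), (94 : ℤ)), ((188 : ℤ), (142 : ℤ)), ((108 : ℤ), (148 : ℤ)), ((48 : ℤ), (151 : ℤ)), ((-9 : ℤ), (113 : ℤ)), ((-18 : ℤ), (54 : ℤ))] ![((131 : ℤ), (-68 : ℤ)), ((181 : ℤ), (-57 : ℤ)), ((46 : ℤ), (-38 : ℤ)), ((140 : ℤ), (-9 : ℤ)), ((60 : ℤ), (-3 : ℤ)), ((0 : ℤ), (0 : ℤ))] ![((46 : ℤ), (-38 : ℤ)), ((131 : ℤ), (-68 : ℤ)), ((181 : ℤ), (-57 : ℤ)), ((140 : ℤ), (-9 : ℤ)), ((60 : ℤ), (-3 : ℤ)), ((0 : ℤ), (0 : ℤ))] ((103 : ℤ), (0 : ℤ)) _ _ _ _ _ (of_decide_eq_true (inst := GoodZ.instDecidable ..) (by decide +kernel))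
  · exact key_bridge ![((0 : ℤ), (0 : ℤ)), ((10 : ℤ), (-11 : ℤ)), ((26 : ℤ), (-16 : ℤ)), ((41 : ℤ), (-13 : ℤ)), ((52 : ℤ), (-1 : ℤ)), ((57 : ℤ), (14 : ℤ)), ((53 : ℤ), (30 : ℤ)), ((42 : ℤ), (42 : ℤ)), ((27 : ℤ), (47 : ℤ)), ((12 : ℤ), (43 : ℤ)), ((0 : ℤ), (32 : ℤ)), ((-4 : ℤ), (17 : ℤ))] ![((26 : ℤ), (-16 : ℤ)), ((41 : ℤ), (-13 : ℤ)), ((10 : ℤ), (-11 : ℤ)), ((30 : ℤ), (-1 : ℤ)), ((0 : ℤ), (0 : ℤ)), ((15 : ℤ), (4 : ℤ))] ![((10 : ℤ), (-11 : ℤ)), ((26 : ℤ), (-16 : ℤ)), ((41 : ℤ), (-13 : ℤ)), ((30 : ℤ), (-1 : ℤ)), ((15 : ℤ), (4 : ℤ)), ((0 : ℤ), (0 : ℤ))] ((22 : ℤ), (0 : ℤ)) _ _ _ _ _ (of_decide_eq_true (inst := GoodZ.instDecidable ..) (by decide +kernel))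
  · exact key_bridge ![((0 : ℤ), (0 : ℤ)), ((10 : ℤ), (-10 : ℤ)), ((26 : ℤ), (-14 : ℤ)), ((42 : ℤ), (-11 : ℤ)), ((52 : ℤ), (2 : ℤ)), ((57 : ℤ), (16 : ℤ)), ((53 : ℤ), (31 : ℤ)), ((41 : ℤ), (43 : ℤ)), ((26 : ℤ), (46 : ℤ)), ((11 : ℤ), (42 : ℤ)), ((-1 : ℤ), (31 : ℤ)), ((-5 : ℤ), (16 : ℤ))] ![((26 : ℤ), (-14 : ℤ)), ((42 : ℤ), (-11 : ℤ)), ((10 : ℤ), (-10 : ℤ)), ((0 : ℤ), (0 : ℤ)), ((30 : ℤ), (1 : ℤ)), ((15 : ℤ), (4 : ℤ))] ![((10 : ℤ), (-10 : ℤ)), ((26 : ℤ), (-14 : ℤ)), ((42 : ℤ), (-11 : ℤ)), ((30 : ℤ), (1 : ℤ)), ((15 : ℤ), (4 : ℤ)), ((0 : ℤ), (0 : ℤ))] ((22 : ℤ), (1 : ℤ)) _ _ _ _ _ (of_decide_eq_true (inst := GoodZ.instDecidable ..) (by decide +kernel))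
  · exact key_bridge ![((0 : ℤ), (0 : ℤ)), ((19 : ℤ), (-8 : ℤ)), ((34 : ℤ), (-14 : ℤ)), ((51 : ℤ), (-12 : ℤ)), ((61 : ℤ), (7 : ℤ)), ((60 : ℤ), (18 : ℤ)), ((53 : ℤ), (36 : ℤ)), ((36 : ℤ), (51 : ℤ)), ((20 : ℤ), (51 : ℤ)), ((2 : ℤ), (48 : ℤ)), ((-6 : ℤ), (36 : ℤ)), ((-6 : ℤ), (19 : ℤ))] ![((34 : ℤ), (-14 : ℤ)), ((51 : ℤ), (-12 : ℤ)), ((19 : ℤ), (-8 : ℤ)), ((0 : ℤ), (0 : ℤ)), ((18 : ℤ), (3 : ℤ)), ((34 : ℤ), (3 : ℤ))] ![((19 : ℤ), (-8 : ℤ)), ((34 : ℤ), (-14 : ℤ)), ((51 : ℤ), (-12 : ℤ)), ((34 : ℤ), (3 : ℤ)), ((18 : ℤ), (3 : ℤ)), ((0 : ℤ), (0 : ℤ))] ((27 : ℤ), (4 : ℤ)) _ _ _ _ _ (of_decide_eq_true (inst := GoodZ.instDecidable ..) (by decide +kernel))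
  · exact key_bridge ![((0 : ℤ), (0 : ℤ)), ((6 : ℤ), (-15 : ℤ)), ((28 : ℤ), (-20 : ℤ)), ((40 : ℤ), (-19 : ℤ)), ((51 : ℤ), (-12 : ℤ)), ((58 : ℤ), (2 : ℤ)), ((53 : ℤ), (19 : ℤ)), ((41 : ℤ), (29 : ℤ)), ((26 : ℤ), (37 : ℤ)), ((13 : ℤ), (38 : ℤ)), ((-4 : ℤ), (26 : ℤ)), ((-4 : ℤ), (15 : ℤ))] ![((28 : ℤ), (-20 : ℤ)), ((40 : ℤ), (-19 : ℤ)), ((6 : ℤ), (-15 : ℤ)), ((51 : ℤ), (-12 : ℤ)), ((36 : ℤ), (-4 : ℤ)), ((23 : ℤ), (-3 : ℤ))] ![((6 : ℤ), (-15 : ℤ)), ((28 : ℤ), (-20 : ℤ)), ((40 : ℤ), (-19 : ℤ)), ((51 : ℤ), (-12 : ℤ)), ((36 : ℤ), (-4 : ℤ)), ((23 : ℤ), (-3 : ℤ))] ((-23 : ℤ), (3 : ℤ)) _ _ _ _ _ (of_decide_eq_true (inst := GoodZ.instDecidable ..) (by decide +kernel))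
  · exact key_bridge ![((0 : ℤ), (0 : ℤ)), ((22 : ℤ), (-23 : ℤ)), ((54 : ℤ), (-33 : ℤ)), ((83 : ℤ), (-25 : ℤ)), ((107 : ℤ), (-2 : ℤ)), ((117 : ℤ), (28 : ℤ)), ((108 : ℤ), (60 : ℤ)), ((87 : ℤ), (84 : ℤ)), ((57 : ℤ), (92 : ℤ)), ((25 : ℤ), (85 : ℤ)), ((2 : ℤ), (63 : ℤ)), ((-6 : ℤ), (31 : ℤ))] ![((54 : ℤ), (-33 : ℤ)), ((83 : ℤ), (-25 : ℤ)), ((22 : ℤ), (-23 : ℤ)), ((107 : ℤ), (-2 : ℤ)), ((45 : ℤ), (-1 : ℤ)), ((77 : ℤ), (6 : ℤ))] ![((22 : ℤ), (-23 : ℤ)), ((54 : ℤ), (-33 : ℤ)), ((83 : ℤ), (-25 : ℤ)), ((107 : ℤ), (-2 : ℤ)), ((77 : ℤ), (6 : ℤ)), ((45 : ℤ), (-1 : ℤ))] ((-45 : ℤ), (1 : ℤ)) _ _ _ _ _ (of_decide_eq_true (inst := GoodZ.instDecidable ..) (by decide +kernel))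
  · exact key_bridge ![((0 : ℤ), (0 : ℤ)), ((39 : ℤ), (-49 : ℤ)), ((96 : ℤ), (-61 : ℤ)), ((163 : ℤ), (-51 : ℤ)), ((198 : ℤ), (-5 : ℤ)), ((215 : ℤ), (62 : ℤ)), ((201 : ℤ), (118 : ℤ)), ((154 : ℤ), (169 : ℤ)), ((94 : ℤ), (187 : ℤ)), ((38 : ℤ), (169 : ℤ)), ((-5 : ℤ), (125 : ℤ)), ((-25 : ℤ), (64 : ℤ))] ![((96 : ℤ), (-61 : ℤ)), ((163 : ℤ), (-51 : ℤ)), ((39 : ℤ), (-49 : ℤ)), ((82 : ℤ), (-5 : ℤ)), ((198 : ℤ), (-5 : ℤ)), ((138 : ℤ), (13 : ℤ))] ![((39 : ℤ), (-49 : ℤ)), ((96 : ℤ), (-61 : ℤ)), ((163 : ℤ), (-51 : ℤ)), ((198 : ℤ), (-5 : ℤ)), ((138 : ℤ), (13 : ℤ)), ((82 : ℤ), (-5 : ℤ))] ((-82 : ℤ), (5 : ℤ)) _ _ _ _ _ (of_decide_eq_true (inst := GoodZ.instDecidable ..) (by decide +kernel))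
  · exact key_bridge ![((0 : ℤ), (0 : ℤ)), ((19 : ℤ), (-14 : ℤ)), ((42 : ℤ), (-27 : ℤ)), ((74 : ℤ), (-15 : ℤ)), ((104 : ℤ), (11 : ℤ)), ((116 : ℤ), (36 : ℤ)), ((118 : ℤ), (62 : ℤ)), ((104 : ℤ), (89 : ℤ)), ((75 : ℤ), (88 : ℤ)), ((44 : ℤ), (77 : ℤ)), ((19 : ℤ), (64 : ℤ)), ((1 : ℤ), (25 : ℤ))] ![((42 : ℤ), (-27 : ℤ)), ((74 : ℤ), (-15 : ℤ)), ((19 : ℤ), (-14 : ℤ)), ((44 : ℤ), (-1 : ℤ)), ((75 : ℤ), (10 : ℤ)), ((104 : ℤ), (11 : ℤ))] ![((19 : ℤ), (-14 : ℤ)), ((42 : ℤ), (-27 : ℤ)), ((74 : ℤ), (-15 : ℤ)), ((104 : ℤ), (11 : ℤ)), ((75 : ℤ), (10 : ℤ)), ((44 : ℤ), (-1 : ℤ))] ((-44 : ℤ), (1 : ℤ)) _ _ _ _ _ (of_decide_eq_true (inst := GoodZ.instDecidable ..) (by decide +kernel))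
  · exact key_bridge ![((0 : ℤ), (0 : ℤ)), ((62 : ℤ), (-50 : ℤ)), ((127 : ℤ), (-60 : ℤ)), ((178 : ℤ), (-45 : ℤ)), ((233 : ℤ), (8 : ℤ)), ((245 : ℤ), (57 : ℤ)), ((213 : ℤ), (129 : ℤ)), ((173 : ℤ), (170 : ℤ)), ((109 : ℤ), (173 : ℤ)), ((35 : ℤ), (174 : ℤ)), ((2 : ℤ), (112 : ℤ)), ((-9 : ℤ), (56 : ℤ))] ![((127 : ℤ), (-60 : ℤ)), ((62 : ℤ), (-50 : ℤ)), ((178 : ℤ), (-45 : ℤ)), ((138 : ℤ), (-4 : ℤ)), ((74 : ℤ), (-1 : ℤ)), ((0 : ℤ), (0 : ℤ))] ![((62 : ℤ), (-50 : ℤ)), ((127 : ℤ), (-60 : ℤ)), ((178 : ℤ), (-45 : ℤ)), ((138 : ℤ), (-4 : ℤ)), ((74 : ℤ), (-1 : ℤ)), ((0 : ℤ), (0 : ℤ))] ((95 : ℤ), (12 : ℤ)) _ _ _ _ _ (of_decide_eq_true (inst := GoodZ.instDecidable ..) (by decide +kernel))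
  · exact key_bridge ![((0 : ℤ), (0 : ℤ)), ((10 : ℤ), (-11 : ℤ)), ((28 : ℤ), (-17 : ℤ)), ((45 : ℤ), (-10 : ℤ)), ((54 : ℤ), (0 : ℤ)), ((62 : ℤ), (13 : ℤ)), ((57 : ℤ), (31 : ℤ)), ((43 : ℤ), (40 : ℤ)), ((30 : ℤ), (43 : ℤ)), ((12 : ℤ), (41 : ℤ)), ((-1 : ℤ), (29 : ℤ)), ((-4 : ℤ), (13 : ℤ))] ![((28 : ℤ), (-17 : ℤ)), ((10 : ℤ), (-11 : ℤ)), ((45 : ℤ), (-10 : ℤ)), ((31 : ℤ), (-1 : ℤ)), ((0 : ℤ), (0 : ℤ)), ((18 : ℤ), (2 : ℤ))] ![((10 : ℤ), (-11 : ℤ)), ((28 : ℤ), (-17 : ℤ)), ((45 : ℤ), (-10 : ℤ)), ((31 : ℤ), (-1 : ℤ)), ((18 : ℤ), (2 : ℤ)), ((0 : ℤ), (0 : ℤ))] ((23 : ℤ), (1 : ℤ)) _ _ _ _ _ (of_decide_eq_true (inst := GoodZ.instDecidable ..) (by decide +kernel))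
  · exact key_bridge ![((0 : ℤ), (0 : ℤ)), ((11 : ℤ), (-12 : ℤ)), ((26 : ℤ), (-15 : ℤ)), ((43 : ℤ), (-12 : ℤ)), ((53 : ℤ), (0 : ℤ)), ((57 : ℤ), (16 : ℤ)), ((53 : ℤ), (31 : ℤ)), ((41 : ℤ), (43 : ℤ)), ((25 : ℤ), (47 : ℤ)), ((10 : ℤ), (43 : ℤ)), ((-1 : ℤ), (31 : ℤ)), ((-6 : ℤ), (16 : ℤ))] ![((26 : ℤ), (-15 : ℤ)), ((11 : ℤ), (-12 : ℤ)), ((43 : ℤ), (-12 : ℤ)), ((0 : ℤ), (0 : ℤ)), ((31 : ℤ), (0 : ℤ)), ((15 : ℤ), (4 : ℤ))] ![((11 : ℤ), (-12 : ℤ)), ((26 : ℤ), (-15 : ℤ)), ((43 : ℤ), (-12 : ℤ)), ((31 : ℤ), (0 : ℤ)), ((15 : ℤ), (4 : ℤ)), ((0 : ℤ), (0 : ℤ))] ((22 : ℤ), (0 : ℤ)) _ _ _ _ _ (of_decide_eq_true (inst := GoodZ.instDecidable ..) (by decide +kernel))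
  · exact key_bridge ![((0 : ℤ), (0 : ℤ)), ((14 : ℤ), (-9 : ℤ)), ((28 : ℤ), (-10 : ℤ)), ((44 : ℤ), (-6 : ℤ)), ((56 : ℤ), (3 : ℤ)), ((57 : ℤ), (14 : ℤ)), ((54 : ℤ), (25 : ℤ)), ((41 : ℤ), (33 : ℤ)), ((25 : ℤ), (33 : ℤ)), ((10 : ℤ), (31 : ℤ)), ((-1 : ℤ), (21 : ℤ)), ((-4 : ℤ), (9 : ℤ))] ![((28 : ℤ), (-10 : ℤ)), ((14 : ℤ), (-9 : ℤ)), ((44 : ℤ), (-6 : ℤ)), ((0 : ℤ), (0 : ℤ)), ((15 : ℤ), (2 : ℤ)), ((31 : ℤ), (2 : ℤ))] ![((14 : ℤ), (-9 : ℤ)), ((28 : ℤ), (-10 : ℤ)), ((44 : ℤ), (-6 : ℤ)), ((31 : ℤ), (2 : ℤ)), ((15 : ℤ), (2 : ℤ)), ((0 : ℤ), (0 : ℤ))] ((25 : ℤ), (1 : ℤ)) _ _ _ _ _ (of_decide_eq_true (inst := GoodZ.instDecidable ..) (by decide +kernel))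
  · exact key_bridge ![((0 : ℤ), (0 : ℤ)), ((10 : ℤ), (-18 : ℤ)), ((28 : ℤ), (-19 : ℤ)), ((45 : ℤ), (-16 : ℤ)), ((61 : ℤ), (-12 : ℤ)), ((66 : ℤ), (5 : ℤ)), ((64 : ℤ), (19 : ℤ)), ((54 : ℤ), (28 : ℤ)), ((34 : ℤ), (34 : ℤ)), ((19 : ℤ), (35 : ℤ)), ((3 : ℤ), (22 : ℤ)), ((-4 : ℤ), (10 : ℤ))] ![((28 : ℤ), (-19 : ℤ)), ((10 : ℤ), (-18 : ℤ)), ((45 : ℤ), (-16 : ℤ)), ((61 : ℤ), (-12 : ℤ)), ((41 : ℤ), (-6 : ℤ)), ((26 : ℤ), (-5 : ℤ))] ![((10 : ℤ), (-18 : ℤ)), ((28 : ℤ), (-19 : ℤ)), ((45 : ℤ), (-16 : ℤ)), ((61 : ℤ), (-12 : ℤ)), ((41 : ℤ), (-6 : ℤ)), ((26 : ℤ), (-5 : ℤ))] ((-26 : ℤ), (5 : ℤ)) _ _ _ _ _ (of_decide_eq_true (inst := GoodZ.instDecidable ..) (by decide +kernel))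
  · exact key_bridge ![((0 : ℤ), (0 : ℤ)), ((16 : ℤ), (-13 : ℤ)), ((30 : ℤ), (-16 : ℤ)), ((44 : ℤ), (-11 : ℤ)), ((60 : ℤ), (-2 : ℤ)), ((61 : ℤ), (14 : ℤ)), ((57 : ℤ), (29 : ℤ)), ((47 : ℤ), (39 : ℤ)), ((30 : ℤ), (43 : ℤ)), ((13 : ℤ), (40 : ℤ)), ((3 : ℤ), (28 : ℤ)), ((-1 : ℤ), (13 : ℤ))] ![((30 : ℤ), (-16 : ℤ)), ((16 : ℤ), (-13 : ℤ)), ((44 : ℤ), (-11 : ℤ)), ((60 : ℤ), (-2 : ℤ)), ((26 : ℤ), (-1 : ℤ)), ((43 : ℤ), (2 : ℤ))] ![((16 : ℤ), (-13 : ℤ)), ((30 : ℤ), (-16 : ℤ)), ((44 : ℤ), (-11 : ℤ)), ((60 : ℤ), (-2 : ℤ)), ((43 : ℤ), (2 : ℤ)), ((26 : ℤ), (-1 : ℤ))] ((-26 : ℤ), (1 : ℤ)) _ _ _ _ _ (of_decide_eq_true (inst := GoodZ.instDecidable ..) (by decide +kernel))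
  · exact key_bridge ![((0 : ℤ), (0 : ℤ)), ((9 : ℤ), (-11 : ℤ)), ((23 : ℤ), (-15 : ℤ)), ((38 : ℤ), (-8 : ℤ)), ((48 : ℤ), (1 : ℤ)), ((53 : ℤ), (17 : ℤ)), ((50 : ℤ), (31 : ℤ)), ((40 : ℤ), (41 : ℤ)), ((26 : ℤ), (44 : ℤ)), ((12 : ℤ), (39 : ℤ)), ((1 : ℤ), (29 : ℤ)), ((-4 : ℤ), (12 : ℤ))] ![((23 : ℤ), (-15 : ℤ)), ((9 : ℤ), (-11 : ℤ)), ((38 : ℤ), (-8 : ℤ)), ((20 : ℤ), (-1 : ℤ)), ((48 : ℤ), (1 : ℤ)), ((34 : ℤ), (4 : ℤ))] ![((9 : ℤ), (-11 : ℤ)), ((23 : ℤ), (-15 : ℤ)), ((38 : ℤ), (-8 : ℤ)), ((48 : ℤ), (1 : ℤ)), ((34 : ℤ), (4 : ℤ)), ((20 : ℤ), (-1 : ℤ))] ((-20 : ℤ), (1 : ℤ)) _ _ _ _ _ (of_decide_eq_true (inst := GoodZ.instDecidable ..) (by decide +kernel))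
  · exact key_bridge ![((0 : ℤ), (0 : ℤ)), ((15 : ℤ), (-10 : ℤ)), ((28 : ℤ), (-14 : ℤ)), ((43 : ℤ), (-10 : ℤ)), ((55 : ℤ), (3 : ℤ)), ((54 : ℤ), (16 : ℤ)), ((51 : ℤ), (29 : ℤ)), ((38 : ℤ), (43 : ℤ)), ((22 : ℤ), (42 : ℤ)), ((8 : ℤ), (39 : ℤ)), ((-2 : ℤ), (30 : ℤ)), ((-4 : ℤ), (12 : ℤ))] ![((28 : ℤ), (-14 : ℤ)), ((15 : ℤ), (-10 : ℤ)), ((43 : ℤ), (-10 : ℤ)), ((25 : ℤ), (-1 : ℤ)), ((39 : ℤ), (2 : ℤ)), ((55 : ℤ), (3 : ℤ))] ![((15 : ℤ), (-10 : ℤ)), ((28 : ℤ), (-14 : ℤ)), ((43 : ℤ), (-10 : ℤ)), ((55 : ℤ), (3 : ℤ)), ((39 : ℤ), (2 : ℤ)), ((25 : ℤ), (-1 : ℤ))] ((-25 : ℤ), (1 : ℤ)) _ _ _ _ _ (of_decide_eq_true (inst := GoodZ.instDecidable ..) (by decide +kernel))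
  · exact key_bridge ![((0 : ℤ), (0 : ℤ)), ((12 : ℤ), (-10 : ℤ)), ((25 : ℤ), (-13 : ℤ)), ((37 : ℤ), (-14 : ℤ)), ((54 : ℤ), (1 : ℤ)), ((61 : ℤ), (10 : ℤ)), ((60 : ℤ), (27 : ℤ)), ((53 : ℤ), (38 : ℤ)), ((42 : ℤ), (40 : ℤ)), ((23 : ℤ), (41 : ℤ)), ((11 : ℤ), (27 : ℤ)), ((6 : ℤ), (17 : ℤ))] ![((37 : ℤ), (-14 : ℤ)), ((25 : ℤ), (-13 : ℤ)), ((12 : ℤ), (-10 : ℤ)), ((30 : ℤ), (-3 : ℤ)), ((19 : ℤ), (-1 : ℤ)), ((0 : ℤ), (0 : ℤ))] ![((12 : ℤ), (-10 : ℤ)), ((25 : ℤ), (-13 : ℤ)), ((37 : ℤ), (-14 : ℤ)), ((30 : ℤ), (-3 : ℤ)), ((19 : ℤ), (-1 : ℤ)), ((0 : ℤ), (0 : ℤ))] ((24 : ℤ), (4 : ℤ)) _ _ _ _ _ (of_decide_eq_true (inst := GoodZ.instDecidable ..) (by decide +kernel))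
  · exact key_bridge ![((0 : ℤ), (0 : ℤ)), ((18 : ℤ), (-22 : ℤ)), ((51 : ℤ), (-29 : ℤ)), ((82 : ℤ), (-30 : ℤ)), ((106 : ℤ), (-4 : ℤ)), ((123 : ℤ), (29 : ℤ)), ((116 : ℤ), (60 : ℤ)), ((96 : ℤ), (84 : ℤ)), ((69 : ℤ), (101 : ℤ)), ((34 : ℤ), (90 : ℤ)), ((8 : ℤ), (66 : ℤ)), ((-3 : ℤ), (43 : ℤ))] ![((82 : ℤ), (-30 : ℤ)), ((51 : ℤ), (-29 : ℤ)), ((18 : ℤ), (-22 : ℤ)), ((62 : ℤ), (-6 : ℤ)), ((0 : ℤ), (0 : ℤ)), ((35 : ℤ), (11 : ℤ))] ![((18 : ℤ), (-22 : ℤ)), ((51 : ℤ), (-29 : ℤ)), ((82 : ℤ), (-30 : ℤ)), ((62 : ℤ), (-6 : ℤ)), ((35 : ℤ), (11 : ℤ)), ((0 : ℤ), (0 : ℤ))] ((44 : ℤ), (2 : ℤ)) _ _ _ _ _ (of_decide_eq_true (inst := GoodZ.instDecidable ..) (by decide +kernel))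
  · exact key_bridge ![((0 : ℤ), (0 : ℤ)), ((16 : ℤ), (-8 : ℤ)), ((30 : ℤ), (-11 : ℤ)), ((47 : ℤ), (-12 : ℤ)), ((59 : ℤ), (3 : ℤ)), ((60 : ℤ), (17 : ℤ)), ((56 : ℤ), (29 : ℤ)), ((42 : ℤ), (43 : ℤ)), ((26 : ℤ), (47 : ℤ)), ((9 : ℤ), (41 : ℤ)), ((-1 : ℤ), (32 : ℤ)), ((-4 : ℤ), (19 : ℤ))] ![((47 : ℤ), (-12 : ℤ)), ((30 : ℤ), (-11 : ℤ)), ((16 : ℤ), (-8 : ℤ)), ((0 : ℤ), (0 : ℤ)), ((33 : ℤ), (2 : ℤ)), ((17 : ℤ), (6 : ℤ))] ![((16 : ℤ), (-8 : ℤ)), ((30 : ℤ), (-11 : ℤ)), ((47 : ℤ), (-12 : ℤ)), ((33 : ℤ), (2 : ℤ)), ((17 : ℤ), (6 : ℤ)), ((0 : ℤ), (0 : ℤ))] ((26 : ℤ), (1 : ℤ)) _ _ _ _ _ (of_decide_eq_true (inst := GoodZ.instDecidable ..) (by decide +kernel))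
  · exact key_bridge ![((0 : ℤ), (0 : ℤ)), ((26 : ℤ), (-8 : ℤ)), ((55 : ℤ), (-11 : ℤ)), ((100 : ℤ), (-13 : ℤ)), ((129 : ℤ), (28 : ℤ)), ((137 : ℤ), (48 : ℤ)), ((139 : ℤ), (73 : ℤ)), ((111 : ℤ), (100 : ℤ)), ((73 : ℤ), (98 : ℤ)), ((39 : ℤ), (86 : ℤ)), ((8 : ℤ), (64 : ℤ)), ((-9 : ℤ), (39 : ℤ))] ![((100 : ℤ), (-13 : ℤ)), ((55 : ℤ), (-11 : ℤ)), ((26 : ℤ), (-8 : ℤ)), ((0 : ℤ), (0 : ℤ)), ((34 : ℤ), (12 : ℤ)), ((72 : ℤ), (14 : ℤ))] ![((26 : ℤ), (-8 : ℤ)), ((55 : ℤ), (-11 : ℤ)), ((100 : ℤ), (-13 : ℤ)), ((72 : ℤ), (14 : ℤ)), ((34 : ℤ), (12 : ℤ)), ((0 : ℤ), (0 : ℤ))] ((57 : ℤ), (14 : ℤ)) _ _ _ _ _ (of_decide_eq_true (inst := GoodZ.instDecidable ..) (by decide +kernel))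
  · exact key_bridge ![((0 : ℤ), (0 : ℤ)), ((10 : ℤ), (-9 : ℤ)), ((21 : ℤ), (-15 : ℤ)), ((38 : ℤ), (-16 : ℤ)), ((46 : ℤ), (-7 : ℤ)), ((49 : ℤ), (1 : ℤ)), ((48 : ℤ), (14 : ℤ)), ((36 : ℤ), (25 : ℤ)), ((23 : ℤ), (29 : ℤ)), ((10 : ℤ), (30 : ℤ)), ((0 : ℤ), (23 : ℤ)), ((-5 : ℤ), (13 : ℤ))] ![((38 : ℤ), (-16 : ℤ)), ((21 : ℤ), (-15 : ℤ)), ((10 : ℤ), (-9 : ℤ)), ((46 : ℤ), (-7 : ℤ)), ((33 : ℤ), (-3 : ℤ)), ((20 : ℤ), (-2 : ℤ))] ![((10 : ℤ), (-9 : ℤ)), ((21 : ℤ), (-15 : ℤ)), ((38 : ℤ), (-16 : ℤ)), ((46 : ℤ), (-7 : ℤ)), ((33 : ℤ), (-3 : ℤ)), ((20 : ℤ), (-2 : ℤ))] ((-20 : ℤ), (2 : ℤ)) _ _ _ _ _ (of_decide_eq_true (inst := GoodZ.instDecidable ..) (by decide +kernel))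
  · exact key_bridge ![((0 : ℤ), (0 : ℤ)), ((15 : ℤ), (-26 : ℤ)), ((58 : ℤ), (-33 : ℤ)), ((87 : ℤ), (-34 : ℤ)), ((106 : ℤ), (-7 : ℤ)), ((123 : ℤ), (26 : ℤ)), ((109 : ℤ), (58 : ℤ)), ((84 : ℤ), (86 : ℤ)), ((54 : ℤ), (99 : ℤ)), ((22 : ℤ), (92 : ℤ)), ((-7 : ℤ), (67 : ℤ)), ((-11 : ℤ), (40 : ℤ))] ![((87 : ℤ), (-34 : ℤ)), ((58 : ℤ), (-33 : ℤ)), ((15 : ℤ), (-26 : ℤ)), ((106 : ℤ), (-7 : ℤ)), ((44 : ℤ), (-1 : ℤ)), ((76 : ℤ), (6 : ℤ))] ![((15 : ℤ), (-26 : ℤ)), ((58 : ℤ), (-33 : ℤ)), ((87 : ℤ), (-34 : ℤ)), ((106 : ℤ), (-7 : ℤ)), ((76 : ℤ), (6 : ℤ)), ((44 : ℤ), (-1 : ℤ))] ((-44 : ℤ), (1 : ℤ)) _ _ _ _ _ (of_decide_eq_true (inst := GoodZ.instDecidable ..) (by decide +kernel))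
  · exact key_bridge ![((0 : ℤ), (0 : ℤ)), ((8 : ℤ), (-8 : ℤ)), ((18 : ℤ), (-13 : ℤ)), ((31 : ℤ), (-14 : ℤ)), ((41 : ℤ), (0 : ℤ)), ((47 : ℤ), (13 : ℤ)), ((46 : ℤ), (25 : ℤ)), ((39 : ℤ), (40 : ℤ)), ((29 : ℤ), (44 : ℤ)), ((15 : ℤ), (39 : ℤ)), ((6 : ℤ), (32 : ℤ)), ((0 : ℤ), (18 : ℤ))] ![((31 : ℤ), (-14 : ℤ)), ((18 : ℤ), (-13 : ℤ)), ((8 : ℤ), (-8 : ℤ)), ((17 : ℤ), (-1 : ℤ)), ((41 : ℤ), (0 : ℤ)), ((31 : ℤ), (4 : ℤ))] ![((8 : ℤ), (-8 : ℤ)), ((18 : ℤ), (-13 : ℤ)), ((31 : ℤ), (-14 : ℤ)), ((41 : ℤ), (0 : ℤ)), ((31 : ℤ), (4 : ℤ)), ((17 : ℤ), (-1 : ℤ))] ((-17 : ℤ), (1 : ℤ)) _ _ _ _ _ (of_decide_eq_true (inst := GoodZ.instDecidable ..) (by decide +kernel))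
  · exact key_bridge ![((0 : ℤ), (0 : ℤ)), ((9 : ℤ), (-10 : ℤ)), ((23 : ℤ), (-13 : ℤ)), ((44 : ℤ), (-14 : ℤ)), ((55 : ℤ), (2 : ℤ)), ((59 : ℤ), (14 : ℤ)), ((59 : ℤ), (26 : ℤ)), ((47 : ℤ), (43 : ℤ)), ((28 : ℤ), (42 : ℤ)), ((15 : ℤ), (40 : ℤ)), ((1 : ℤ), (31 : ℤ)), ((-8 : ℤ), (15 : ℤ))] ![((44 : ℤ), (-14 : ℤ)), ((23 : ℤ), (-13 : ℤ)), ((9 : ℤ), (-10 : ℤ)), ((23 : ℤ), (-1 : ℤ)), ((36 : ℤ), (1 : ℤ)), ((55 : ℤ), (2 : ℤ))] ![((9 : ℤ), (-10 : ℤ)), ((23 : ℤ), (-13 : ℤ)), ((44 : ℤ), (-14 : ℤ)), ((55 : ℤ), (2 : ℤ)), ((36 : ℤ), (1 : ℤ)), ((23 : ℤ), (-1 : ℤ))] ((-23 : ℤ), (1 : ℤ)) _ _ _ _ _ (of_decide_eq_true (inst := GoodZ.instDecidable ..) (by decide +kernel))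
end
end

section
/- Lemma 4.5: Let n ≥ 4 and let (V₁, …, V_{2(n−1)}; B₊, B₋) be a stable 2(n−1)-gon of type D_n with B₋ ≤ B₊. List the 2n points {V_j} ∪ {B₊, B₋} in increasing order as Y_{−n} ≤ ⋯ ≤ Y_{−1} ≤ Y₁ ≤ ⋯ ≤ Y_n. Then: (i) the n points Y_{−n}, …, Y_{−1} form, in a suitable cyclic order, a positively convex n-gon (the polygon ∇_n^−); and (ii) the n points obtained from {Y_{−n}, …, Y_{−1}} by replacing B₋ with B₊ also form, in a suitable cyclic order, a positively convex n-gon (the polygon ∇_n^+). -/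
noncomputable section

/-- Central symmetry about `0` for a `2(n-1)`-gon. -/
def DSym (n : ℕ) (V : ZMod (2 * (n - 1)) → ℂ) : Prop :=
  ∀ j : ZMod (2 * (n - 1)), V (j + ((n - 1 : ℕ) : ZMod (2 * (n - 1)))) = -V j

/-- A stable `2(n-1)`-gon of type `D_n`, with punctures `B₊ = B` and `B₋ = -B`. -/
def IsStableDGon (n : ℕ) (V : ZMod (2 * (n - 1)) → ℂ) (B : ℂ) : Prop :=
  PosConvex V ∧ DSym n V ∧ cLe (-B) B ∧
    (-B) ∈ DiagGon V (n - 2) ∧ B ∈ DiagGon V (n - 2)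

/-- The `2n` marked points of a type `D_n` gon: the vertices together with the two punctures. -/
def DPoints (n : ℕ) (V : ZMod (2 * (n - 1)) → ℂ) (B : ℂ) :
    ZMod (2 * (n - 1)) ⊕ Fin 2 → ℂ :=
  Sum.elim V (fun b => if b = 0 then B else -B)

/-- `Y 0, Y 1, …, Y (2n-1)` is an increasing enumeration (via the bijection `e`) of the
`2n` marked points; `Y i` corresponds to the point `Y_{i-n}` (for `0 ≤ i ≤ n-1`) resp.
`Y_{i-n+1}` (for `n ≤ i ≤ 2n-1`) of the paper. -/
def DEnum (n : ℕ) (V : ZMod (2 * (n - 1)) → ℂ) (B : ℂ) (Y : ℕ → ℂ)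
    (e : Fin (2 * n) ≃ (ZMod (2 * (n - 1)) ⊕ Fin 2)) : Prop :=
  (∀ m : Fin (2 * n), Y (m : ℕ) = DPoints n V B (e m)) ∧
  (∀ i j : ℕ, i < j → j < 2 * n → cLe (Y i) (Y j))


lemma cross_def (u v : ℂ) : cross u v = u.re * v.im - u.im * v.re := by
  simp [cross, Complex.mul_im]; ring

lemma cross_rot (a b c : ℂ) : cross (b - a) (c - a) = cross (c - b) (a - b) := by
  simp [cross_def]; ring

lemma jacobi (u a b c : ℂ) :
    cross b c * cross u a - cross a c * cross u b + cross a b * cross u c = 0 := by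
  simp [cross_def]; ring

lemma cLt_trans {a b c : ℂ} (h1 : cLt a b) (h2 : cLt b c) : cLt a c := by
  unfold cLt at *; rcases h1 with h1 | ⟨h1, h1'⟩ <;> rcases h2 with h2 | ⟨h2, h2'⟩
  · left; linarith
  · left; linarith
  · left; linarith
  · right; exact ⟨by linarith, by linarith⟩

lemma cLt_irrefl (a : ℂ) : ¬ cLt a a := by
  unfold cLt; push_neg; refine ⟨le_refl _, fun h => le_refl _⟩

lemma cLt_asymm {a b : ℂ} (h : cLt a b) : ¬ cLt b a := fun h' => cLt_irrefl a (cLt_trans h h')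

lemma cLt_total {a b : ℂ} (h : a ≠ b) : cLt a b ∨ cLt b a := by
  unfold cLt
  rcases lt_trichotomy a.im b.im with h1 | h1 | h1
  · exact Or.inl (Or.inl h1)
  · rcases lt_trichotomy a.re b.re with h2 | h2 | h2
    · exact Or.inl (Or.inr ⟨h1, h2⟩)
    · exact absurd (Complex.ext h2 h1) h
    · exact Or.inr (Or.inr ⟨h1.symm, h2⟩)
  · exact Or.inr (Or.inl h1)

lemma cLt_neg {a b : ℂ} (h : cLt a b) : cLt (-b) (-a) := by
  unfold cLt at *; simp only [Complex.neg_im, Complex.neg_re]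
  rcases h with h | ⟨h, h'⟩
  · left; linarith
  · right; exact ⟨by linarith, by linarith⟩

lemma cLe_trans_cLt {a b c : ℂ} (h1 : cLe a b) (h2 : cLt b c) : cLt a c := by
  rcases h1 with h1 | rfl; exacts [cLt_trans h1 h2, h2]

lemma cLt_trans_cLe {a b c : ℂ} (h1 : cLt a b) (h2 : cLe b c) : cLt a c := by
  rcases h2 with h2 | rfl; exacts [cLt_trans h1 h2, h1]

lemma cLe_trans {a b c : ℂ} (h1 : cLe a b) (h2 : cLe b c) : cLe a c := by
  rcases h2 with h2 | rfl; exacts [Or.inl (cLe_trans_cLt h1 h2), h1]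

lemma not_cLt {a b : ℂ} (h : ¬ cLt a b) : cLe b a := by
  rcases eq_or_ne a b with rfl | hne
  · exact Or.inr rfl
  · rcases cLt_total hne with h1 | h1; exacts [absurd h1 h, Or.inl h1]

-- from cLe (-B) B : B = 0 or both strict around 0
lemma punct_split {B : ℂ} (h : cLe (-B) B) : B = 0 ∨ (cLt (-B) 0 ∧ cLt 0 B) := by
  rcases h with h | h
  · right
    unfold cLt at *
    simp only [Complex.neg_im, Complex.neg_re, Complex.zero_im, Complex.zero_re] at *
    rcases h with h | ⟨h, h'⟩
    · constructor <;> left <;> linarith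
    · refine ⟨Or.inr ⟨by linarith, by linarith⟩, Or.inr ⟨by linarith, by linarith⟩⟩
  · left
    have h2 : (2:ℂ) * B = 0 := by linear_combination - h
    simpa using h2

-- normalized wedge lemma: a = 0, b = 1
lemma wedge0 (q1 q2 P : ℂ)
    (h2 : 0 < cross (1 - q2) (q1 - q2))
    (h3 : 0 < cross q1 P)
    (h4 : 0 < cross (1 - q2) (P - q2))
    (h5a : 0 < q1.im) (h5b : 0 < q2.im) :
    0 < P.im := by
  simp only [cross_def, Complex.sub_re, Complex.sub_im, Complex.one_re, Complex.one_im] at *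
  set x1 := q1.re; set y1 := q1.im; set x2 := q2.re; set y2 := q2.im
  -- bracket := (1-x2)*y1 + x1*y2 ;  h2 gives bracket > y2 ; y2*h3 + y1*h4 gives P.im * bracket > y1*y2
  nlinarith [mul_pos h5a h5b, mul_pos h5b h3, mul_pos h5a h4]

lemma cross_mul (l u v : ℂ) : cross (l * u) (l * v) = Complex.normSq l * cross u v := by
  simp [cross_def, Complex.mul_re, Complex.mul_im, Complex.normSq_apply]; ring

-- general wedge lemma
lemma wedge (a b q1 q2 P : ℂ)
    (h2 : 0 < cross (b - q2) (q1 - q2))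
    (h3 : 0 < cross (q1 - a) (P - a))
    (h4 : 0 < cross (b - q2) (P - q2))
    (h5a : 0 < cross (b - a) (q1 - a)) (h5b : 0 < cross (b - a) (q2 - a)) :
    0 < cross (b - a) (P - a) := by
  have hba : b - a ≠ 0 := by
    intro h; rw [h] at h5a; simp [cross_def] at h5a
  set l : ℂ := (b - a)⁻¹ with hl
  have hlne : l ≠ 0 := inv_ne_zero hba
  have hnl : 0 < Complex.normSq l := Complex.normSq_pos.2 hlne
  -- transform z ↦ l * (z - a)
  have key : ∀ u v : ℂ, 0 < cross u v ↔ 0 < cross (l * u) (l * v) := by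
    intro u v; rw [cross_mul]; constructor <;> intro h <;> nlinarith
  have hb1 : l * (b - a) = 1 := inv_mul_cancel₀ hba
  have e1 : ∀ z w : ℂ, l * (z - w) = l * (z - a) - l * (w - a) := by intro z w; ring
  set Q1 := l * (q1 - a); set Q2 := l * (q2 - a); set PP := l * (P - a)
  have w2 : 0 < cross (1 - Q2) (Q1 - Q2) := by
    have := (key _ _).1 h2
    rwa [e1 b q2, e1 q1 q2, hb1] at this
  have w3 : 0 < cross Q1 PP := by
    have := (key _ _).1 h3
    rwa [show l * (q1 - a) = Q1 from rfl] at this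
  have w4 : 0 < cross (1 - Q2) (PP - Q2) := by
    have := (key _ _).1 h4
    rwa [e1 b q2, e1 P q2, hb1] at this
  have w5a : 0 < Q1.im := by
    have := (key _ _).1 h5a
    rw [hb1] at this
    simpa [cross_def, Q1] using this
  have w5b : 0 < Q2.im := by
    have := (key _ _).1 h5b
    rw [hb1] at this
    simpa [cross_def, Q2] using this
  have := wedge0 Q1 Q2 PP w2 w3 w4 w5a w5b
  have := (key (b-a) (P-a)).2 (by rw [hb1]; simpa [cross_def, PP] using this)
  exact this

lemma cross_add_right (u v w : ℂ) : cross u (v + w) = cross u v + cross u w := by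
  simp [cross_def]; ring

lemma cross_real_smul (t : ℝ) (u v : ℂ) : cross u ((t:ℂ) * v) = t * cross u v := by
  simp [cross_def]; ring

-- a point on a segment with both endpoints cLt 0 is cLt 0
lemma seg_cLt0 {a c : ℂ} {t : ℝ} (ht0 : 0 ≤ t) (ht1 : t ≤ 1)
    (ha : cLt a 0) (hc : cLt c 0) : cLt (a + (t:ℂ) * (c - a)) 0 := by
  set z := a + (t:ℂ) * (c - a) with hz
  have him : z.im = (1 - t) * a.im + t * c.im := by
    simp [hz, Complex.add_im, Complex.mul_im, Complex.sub_im]; ring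
  have hre : z.re = (1 - t) * a.re + t * c.re := by
    simp [hz, Complex.add_re, Complex.mul_re, Complex.sub_re]; ring
  unfold cLt at *
  simp only [Complex.zero_im, Complex.zero_re] at *
  have haim : a.im ≤ 0 := by rcases ha with h | ⟨h, _⟩ <;> linarith
  have hcim : c.im ≤ 0 := by rcases hc with h | ⟨h, _⟩ <;> linarith
  have hzim : z.im ≤ 0 := by rw [him]; nlinarith
  rcases lt_or_eq_of_le hzim with h | h
  · exact Or.inl h
  · right
    refine ⟨h, ?_⟩
    rw [him] at h
    have h1 : (1 - t) * a.im = 0 ∧ t * c.im = 0 := by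
      constructor <;> nlinarith
    rw [hre]
    rcases eq_or_lt_of_le ht0 with rfl | ht0'
    · simp only [zero_mul, sub_zero, one_mul, add_zero]
      rcases ha with hh | ⟨_, hh⟩
      · exfalso; nlinarith [h1.1]
      · simpa using hh
    · rcases eq_or_lt_of_le ht1 with rfl | ht1'
      · simp only [sub_self, zero_mul, one_mul, zero_add]
        rcases hc with hh | ⟨_, hh⟩
        · exfalso; nlinarith [h1.2]
        · simpa using hh
      · have haim0 : a.im = 0 := by nlinarith [h1.1]
        have hcim0 : c.im = 0 := by nlinarith [h1.2]
        have hare : a.re < 0 := by rcases ha with hh | ⟨_, hh⟩ <;> linarith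
        have hcre : c.re < 0 := by rcases hc with hh | ⟨_, hh⟩ <;> linarith
        nlinarith

lemma seg_cLe0 {a c : ℂ} {t : ℝ} (ht0 : 0 ≤ t) (ht1 : t ≤ 1)
    (ha : cLe 0 a) (hc : cLe 0 c) : cLe 0 (a + (t:ℂ) * (c - a)) := by
  set z := a + (t:ℂ) * (c - a) with hz
  have him : z.im = (1 - t) * a.im + t * c.im := by
    simp [hz, Complex.add_im, Complex.mul_im, Complex.sub_im]; ring
  have hre : z.re = (1 - t) * a.re + t * c.re := by
    simp [hz, Complex.add_re, Complex.mul_re, Complex.sub_re]; ring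
  have haim : 0 ≤ a.im := by
    rcases ha with h | h
    · rcases h with h | ⟨h, _⟩ <;> simp only [Complex.zero_im] at h <;> linarith
    · rw [← h]; simp
  have hcim : 0 ≤ c.im := by
    rcases hc with h | h
    · rcases h with h | ⟨h, _⟩ <;> simp only [Complex.zero_im] at h <;> linarith
    · rw [← h]; simp
  have hzim : 0 ≤ z.im := by rw [him]; nlinarith
  rcases lt_or_eq_of_le hzim with h | h
  · exact Or.inl (Or.inl h)
  · have h1 : (1 - t) * a.im = 0 ∧ t * c.im = 0 := by
      constructor <;> nlinarith
    have hare : a.im = 0 → 0 ≤ a.re := by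
      intro him0
      rcases ha with hh | hh
      · rcases hh with hh | ⟨_, hh⟩
        · simp only [Complex.zero_im] at hh; linarith
        · simp only [Complex.zero_re] at hh; linarith
      · rw [← hh]; simp
    have hcre : c.im = 0 → 0 ≤ c.re := by
      intro him0
      rcases hc with hh | hh
      · rcases hh with hh | ⟨_, hh⟩
        · simp only [Complex.zero_im] at hh; linarith
        · simp only [Complex.zero_re] at hh; linarith
      · rw [← hh]; simp
    have hzre : 0 ≤ z.re := by
      rw [hre]
      rcases eq_or_lt_of_le ht0 with rfl | ht0'
      · have : a.im = 0 := by nlinarith [h1.1]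
        have := hare this; nlinarith
      · rcases eq_or_lt_of_le ht1 with rfl | ht1'
        · have : c.im = 0 := by nlinarith [h1.2]
          have := hcre this; nlinarith
        · have h2 : a.im = 0 := by nlinarith [h1.1]
          have h3 : c.im = 0 := by nlinarith [h1.2]
          nlinarith [hare h2, hcre h3]
    rcases lt_or_eq_of_le hzre with h2 | h2
    · exact Or.inl (Or.inr ⟨by simpa using h, by simpa using h2⟩)
    · right
      exact Complex.ext (by simpa using h2) (by simpa using h)

lemma cross_sub_right (u v w : ℂ) : cross u (v - w) = cross u v - cross u w := by
  simp [cross_def]; ring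

lemma crossSelf0 (u : ℂ) : cross u u = 0 := by simp [cross_def]; ring

lemma cross_anti (u v : ℂ) : cross u v = - cross v u := by simp [cross_def]; ring

lemma cross_eq_zero_param {u v : ℂ} (hu : u ≠ 0) (h : cross u v = 0) :
    ∃ r : ℝ, v = (r:ℂ) * u := by
  have hn : u.re ^ 2 + u.im ^ 2 ≠ 0 := by
    intro h0
    apply hu
    have h1 : u.re = 0 := by nlinarith [sq_nonneg u.re, sq_nonneg u.im]
    have h2 : u.im = 0 := by nlinarith [sq_nonneg u.re, sq_nonneg u.im]
    exact Complex.ext h1 h2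
  rw [cross_def] at h
  refine ⟨(u.re * v.re + u.im * v.im) / (u.re ^ 2 + u.im ^ 2), ?_⟩
  apply Complex.ext
  · simp only [Complex.mul_re, Complex.ofReal_re, Complex.ofReal_im, zero_mul, sub_zero]
    field_simp
    linear_combination (-u.im) * h
  · simp only [Complex.mul_im, Complex.ofReal_re, Complex.ofReal_im, zero_mul, add_zero]
    field_simp
    linear_combination u.re * h

lemma quad (a b c d : ℂ) (h1 : 0 < cross (b-a) (c-a)) (h2 : 0 < cross (b-a) (d-a))
    (h3 : 0 < cross (c-b) (d-b)) (h4 : 0 < cross (c-a) (d-a))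
    (ha : cLe 0 a) (hc : cLe 0 c) (hb : cLt b 0) (hd : cLt d 0) : False := by
  have hp : 0 < cross (d - b) (a - b) := by rw [← cross_rot]; exact h2
  have hq : cross (d - b) (c - b) < 0 := by
    have h' : cross (d-b) (c-b) = - cross (c-b) (d-b) := cross_anti _ _
    rw [h']; linarith
  set p := cross (d - b) (a - b) with hpdef
  set q := cross (d - b) (c - b) with hqdef
  set t : ℝ := p / (p - q) with htdef
  have hpq : 0 < p - q := by linarith
  have ht0 : 0 ≤ t := le_of_lt (div_pos hp hpq)
  have ht1 : t ≤ 1 := by rw [htdef, div_le_one hpq]; linarith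
  set z := a + (t:ℂ) * (c - a) with hzdef
  have hz0 : cLe 0 z := seg_cLe0 ht0 ht1 ha hc
  have hne := hpq.ne'
  have hcross : cross (d - b) (z - b) = 0 := by
    have step : cross (d - b) (z - b) = p + t * (q - p) := by
      rw [hpdef, hqdef, hzdef]; simp [cross_def]; ring
    rw [step, htdef]; field_simp; ring
  have hdb : d - b ≠ 0 := by
    intro h0
    have hp0 : p = 0 := by rw [hpdef, h0]; simp [cross_def]
    linarith
  obtain ⟨r, hr⟩ := cross_eq_zero_param hdb hcross
  have φr : cross (c - a) (z - a) = 0 := by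
    have hza : z - a = (t:ℂ) * (c - a) := by rw [hzdef]; ring
    rw [hza, cross_real_smul, crossSelf0, mul_zero]
  have expand2 : z - a = (b - a) + (r:ℝ) * ((d - a) - (b - a)) := by
    have : z - b = (r:ℝ) * (d - b) := hr
    have h5 : z = b + (r:ℝ) * (d - b) := by linear_combination this
    rw [h5]; push_cast; ring
  have φval : cross (c-a) (b-a) + r * (cross (c-a) (d-a) - cross (c-a) (b-a)) = 0 := by
    have e2 : cross (c - a) (z - a)
        = cross (c-a) (b-a) + r * (cross (c-a) (d-a) - cross (c-a) (b-a)) := by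
      rw [expand2]; simp [cross_def]; ring
    rw [← e2, φr]
  have φ0 : cross (c-a) (b-a) < 0 := by
    have h' : cross (c-a) (b-a) = - cross (b-a) (c-a) := cross_anti _ _
    rw [h']; linarith
  have hr0 : 0 ≤ r := by nlinarith [φval, φ0, h4]
  have hr1 : r ≤ 1 := by nlinarith [φval, φ0, h4]
  have hzb : z = b + (r:ℂ) * (d - b) := by
    have : z - b = (r:ℝ) * (d - b) := hr
    linear_combination this
  have hlt : cLt z 0 := by rw [hzb]; exact seg_cLt0 hr0 hr1 hb hd
  exact cLt_irrefl 0 (cLe_trans_cLt hz0 hlt)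


lemma natCast_inj_lt {N x y : ℕ} [NeZero N] (hx : x < N) (hy : y < N)
    (he : (x : ZMod N) = y) : x = y := by
  have hx' := ZMod.val_cast_of_lt (n := N) hx
  have hy' := ZMod.val_cast_of_lt (n := N) hy
  rw [he] at hx'; omega

lemma natCast_ne_zero' {N x : ℕ} [NeZero N] (h1 : 0 < x) (h2 : x < N) : (x : ZMod N) ≠ 0 := by
  intro he
  have h0 : ((0:ℕ) : ZMod N) = (0 : ZMod N) := by push_cast; ring
  have := natCast_inj_lt h2 (Nat.pos_of_ne_zero (NeZero.ne N)) (by rw [he, h0])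
  omega

section Convex
variable {N : ℕ} [NeZero N] {V : ZMod N → ℂ}

lemma add_natCast_ne {x : ℕ} (a : ZMod N) (h1 : 0 < x) (h2 : x < N) : a + (x : ZMod N) ≠ a := by
  intro he
  exact natCast_ne_zero' h1 h2 (by linear_combination he)

lemma base1 (hV : PosConvex V) (hh : 3 ≤ N) (a : ZMod N) {q : ℕ} (hq2 : 2 ≤ q) (hq : q ≤ N - 1) :
    0 < cross (V (a + 1) - V a) (V (a + (q : ZMod N)) - V a) := by
  have h1 : a + (q : ZMod N) ≠ (a + 1) - 1 := by
    simpa using add_natCast_ne a (x := q) (by omega) (by omega)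
  have h2 : a + (q : ZMod N) ≠ a + 1 := by
    intro he
    have hc : (q : ZMod N) = ((1 : ℕ) : ZMod N) := by push_cast; linear_combination he
    have := natCast_inj_lt (by omega) (by omega) hc
    omega
  have := hV (a + 1) (a + (q : ZMod N)) h1 h2
  simpa using this

lemma base2 (hV : PosConvex V) (hh : 3 ≤ N) (a : ZMod N) {p : ℕ} (hp : 1 ≤ p)
    (hq : p + 1 ≤ N - 1) :
    0 < cross (V (a + (p : ZMod N)) - V a) (V (a + ((p+1 : ℕ) : ZMod N)) - V a) := by
  rw [cross_rot]
  have hsub : (a + ((p+1:ℕ) : ZMod N)) - 1 = a + (p : ZMod N) := by push_cast; ring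
  have h1 : a ≠ (a + ((p+1:ℕ) : ZMod N)) - 1 := by
    rw [hsub]; exact (add_natCast_ne a (by omega) (by omega)).symm
  have h2 : a ≠ a + ((p+1:ℕ) : ZMod N) := (add_natCast_ne a (by omega) (by omega)).symm
  have := hV (a + ((p+1:ℕ) : ZMod N)) a h1 h2
  rwa [hsub] at this

lemma triple (hV : PosConvex V) (hh : 3 ≤ N) :
    ∀ q a, ∀ p : ℕ, 1 ≤ p → p < q → q ≤ N - 1 →
      0 < cross (V (a + (p : ZMod N)) - V a) (V (a + (q : ZMod N)) - V a) := by
  intro q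
  induction q using Nat.strong_induction_on with
  | _ q IH =>
    intro a p hp hpq hq
    rcases eq_or_lt_of_le (Nat.succ_le_of_lt hpq) with hq1 | hq1
    · rw [← hq1]; exact base2 hV hh a hp (by omega)
    · rcases eq_or_lt_of_le hp with hp1 | hp1
      · rw [← hp1]
        have := base1 hV hh a (q := q) (by omega) hq
        simpa using this
      · have c1 : 0 < cross (V (a + ((q-1:ℕ) : ZMod N)) - V a) (V (a + (q : ZMod N)) - V a) := by
          have := base2 hV hh a (p := q - 1) (by omega) (by omega)
          have e : (q - 1) + 1 = q := by omega
          rwa [e] at this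
        have c2 : 0 < cross (V (a + 1) - V a) (V (a + (p : ZMod N)) - V a) :=
          base1 hV hh a (by omega) (by omega)
        have c3 : 0 < cross (V (a + (p : ZMod N)) - V a) (V (a + ((q-1:ℕ) : ZMod N)) - V a) :=
          IH (q-1) (by omega) a p hp (by omega) (by omega)
        have c4 : 0 < cross (V (a + 1) - V a) (V (a + (q : ZMod N)) - V a) :=
          base1 hV hh a (by omega) hq
        have c5 : 0 < cross (V (a + 1) - V a) (V (a + ((q-1:ℕ) : ZMod N)) - V a) :=
          base1 hV hh a (by omega) (by omega)
        have key := jacobi (V (a + 1) - V a) (V (a + (p : ZMod N)) - V a)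
          (V (a + ((q-1:ℕ) : ZMod N)) - V a) (V (a + (q : ZMod N)) - V a)
        nlinarith [mul_pos c1 c2, mul_pos c3 c4, key, c5]

end Convex



section DGon
variable {n : ℕ} {V : ZMod (2 * (n - 1)) → ℂ}

lemma Vinj [NeZero (2*(n-1))] (hV : PosConvex V) (hh : 3 ≤ 2*(n-1)) :
    Function.Injective V := by
  intro x y hxy
  by_contra hne
  rcases eq_or_ne x (y - 1) with rfl | hne2
  · have h1 : y + 1 ≠ y - 1 := by
      intro he
      have hc : ((2:ℕ) : ZMod (2*(n-1))) = 0 := by push_cast; linear_combination he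
      exact natCast_ne_zero' (by omega) (by omega) hc
    have h2 : y + 1 ≠ y := by
      have := add_natCast_ne y (x := 1) (by omega) (by omega)
      simpa using this
    have := hV y (y + 1) h1 h2
    rw [hxy] at this
    simp [cross_def] at this
  · have := hV y x hne2 hne
    rw [hxy, crossSelf0] at this
    exact lt_irrefl 0 this

lemma chord (hn : 4 ≤ n) (hV : PosConvex V) {P : ℂ} (hP : P ∈ DiagGon V (n-2))
    (a : ZMod (2*(n-1))) {m : ℕ} (h1 : 1 ≤ m) (h2 : m ≤ n - 2) :
    0 < cross (V (a + (m : ZMod (2*(n-1)))) - V a) (P - V a) := by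
  haveI : NeZero (2*(n-1)) := ⟨by omega⟩
  have hh : 3 ≤ 2*(n-1) := by omega
  rcases eq_or_lt_of_le h2 with rfl | hlt
  · exact hP a
  · have e1 : ((m+n : ℕ) : ZMod (2*(n-1))) + ((n-2:ℕ) : ZMod (2*(n-1)))
        = (m : ZMod (2*(n-1))) := by
      have hee : (m+n) + (n-2) = m + 2*(n-1) := by omega
      calc ((m+n : ℕ) : ZMod (2*(n-1))) + ((n-2:ℕ) : ZMod (2*(n-1)))
          = (((m+n)+(n-2) : ℕ) : ZMod (2*(n-1))) := by push_cast; ring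
        _ = ((m + 2*(n-1) : ℕ) : ZMod (2*(n-1))) := by rw [hee]
        _ = (m : ZMod (2*(n-1))) := by rw [Nat.cast_add, ZMod.natCast_self, add_zero]
    have e2 : ((m+n : ℕ) : ZMod (2*(n-1))) + ((2*n-4-m:ℕ) : ZMod (2*(n-1)))
        = ((n-2:ℕ) : ZMod (2*(n-1))) := by
      have hee : (m+n) + (2*n-4-m) = (n-2) + 2*(n-1) := by omega
      calc ((m+n : ℕ) : ZMod (2*(n-1))) + ((2*n-4-m:ℕ) : ZMod (2*(n-1)))
          = (((m+n)+(2*n-4-m) : ℕ) : ZMod (2*(n-1))) := by push_cast; ring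
        _ = (((n-2) + 2*(n-1) : ℕ) : ZMod (2*(n-1))) := by rw [hee]
        _ = ((n-2:ℕ) : ZMod (2*(n-1))) := by rw [Nat.cast_add, ZMod.natCast_self, add_zero]
    apply wedge (V a) (V (a + (m : ZMod (2*(n-1))))) (V (a + ((n-2:ℕ) : ZMod (2*(n-1)))))
      (V (a + ((m+n : ℕ) : ZMod (2*(n-1))))) P
    · have := triple hV hh (2*n-4-m) (a + ((m+n:ℕ) : ZMod (2*(n-1)))) (n-2)
        (by omega) (by omega) (by omega)
      rw [add_assoc, add_assoc, e1, e2] at this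
      exact this
    · exact hP a
    · have := hP (a + ((m+n:ℕ) : ZMod (2*(n-1))))
      rw [add_assoc, e1] at this
      exact this
    · exact triple hV hh (n-2) a m h1 hlt (by omega)
    · exact triple hV hh (m+n) a m h1 (by omega) (by omega)

end DGon

lemma posConvex_of_triples {n : ℕ} (hn : 3 ≤ n) (W : ℕ → ℂ)
    (hT : ∀ a b c : ℕ, a < b → b < c → c < n → 0 < cross (W b - W a) (W c - W a)) :
    PosConvex (fun x : ZMod n => W x.val) := by
  haveI : NeZero n := ⟨by omega⟩
  intro j i hi1 hi2
  simp only []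
  have hvalj : j.val < n := j.val_lt
  have hvali : i.val < n := i.val_lt
  have hne : i.val ≠ j.val := fun he => hi2 (by
    have : ((i.val : ℕ) : ZMod n) = ((j.val : ℕ) : ZMod n) := by rw [he]
    rwa [ZMod.natCast_val, ZMod.natCast_val, ZMod.cast_id, ZMod.cast_id] at this)
  rcases eq_or_ne j 0 with rfl | hj0
  · have hK0 : ((0:ZMod n) - 1) = ((n - 1 : ℕ) : ZMod n) := by
      push_cast [Nat.cast_sub (by omega : 1 ≤ n)]
      simp [ZMod.natCast_self]
    have hK : ((0 : ZMod n) - 1).val = n - 1 := by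
      rw [hK0, ZMod.val_cast_of_lt (by omega)]
    have hIne : i.val ≠ n - 1 := by
      intro he
      apply hi1
      have h1 : i = ((i.val : ℕ) : ZMod n) := by rw [ZMod.natCast_val, ZMod.cast_id]
      rw [h1, he]
      exact hK0.symm
    have hI0 : i.val ≠ 0 := by
      intro he
      apply hi2
      have : i = ((i.val : ℕ) : ZMod n) := by rw [ZMod.natCast_val, ZMod.cast_id]
      rw [this, he]; simp
    rw [hK, ZMod.val_zero]
    have := hT 0 i.val (n-1) (by omega) (by omega) (by omega)
    rw [cross_rot] at this
    rw [cross_rot] at this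
    exact this
  · have hJ1 : 1 ≤ j.val := by
      rcases Nat.eq_zero_or_pos j.val with h | h
      · exfalso
        apply hj0
        have h1 : j = ((j.val : ℕ) : ZMod n) := by rw [ZMod.natCast_val, ZMod.cast_id]
        rw [h1, h]; simp
      · exact h
    have hK : (j - 1).val = j.val - 1 := by
      have : j - 1 = ((j.val - 1 : ℕ) : ZMod n) := by
        push_cast [Nat.cast_sub hJ1]
        rw [ZMod.natCast_val, ZMod.cast_id]
      rw [this, ZMod.val_cast_of_lt (by omega)]
    have hIne : i.val ≠ j.val - 1 := by
      intro he
      apply hi1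
      have h1 : i = ((i.val : ℕ) : ZMod n) := by rw [ZMod.natCast_val, ZMod.cast_id]
      have h2 : j - 1 = (((j-1).val : ℕ) : ZMod n) := by rw [ZMod.natCast_val, ZMod.cast_id]
      rw [h1, h2, hK, he]
    rw [hK]
    rcases Nat.lt_or_ge i.val j.val with hlt | hge
    · have hIlt : i.val < j.val - 1 := by omega
      have := hT i.val (j.val - 1) j.val hIlt (by omega) hvalj
      rw [cross_rot] at this
      exact this
    · have hIgt : j.val < i.val := by omega
      exact hT (j.val - 1) j.val i.val (by omega) hIgt hvali

section DGon2
variable {n : ℕ} {V : ZMod (2 * (n - 1)) → ℂ}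

lemma cast_add_sub (hn : 4 ≤ n) {x y : ℕ} (hxy : x ≤ y) :
    (x : ZMod (2*(n-1))) + ((y - x : ℕ) : ZMod (2*(n-1))) = (y : ZMod (2*(n-1))) := by
  push_cast [Nat.cast_sub hxy]; ring

lemma nabla_triples (hn : 4 ≤ n) (hV : PosConvex V) {Bp : ℂ} (hB : Bp ∈ DiagGon V (n-2))
    (k : ZMod (2*(n-1))) :
    ∀ a b c : ℕ, a < b → b < c → c < n →
      0 < cross ((if b = n-1 then Bp else V (k + 1 + (b : ZMod (2*(n-1)))))
            - (if a = n-1 then Bp else V (k + 1 + (a : ZMod (2*(n-1))))))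
          ((if c = n-1 then Bp else V (k + 1 + (c : ZMod (2*(n-1)))))
            - (if a = n-1 then Bp else V (k + 1 + (a : ZMod (2*(n-1)))))) := by
  haveI : NeZero (2*(n-1)) := ⟨by omega⟩
  have hh : 3 ≤ 2*(n-1) := by omega
  intro a b c hab hbc hcn
  have ha' : a ≠ n - 1 := by omega
  have hb' : b ≠ n - 1 := by omega
  rw [if_neg ha', if_neg hb']
  rcases eq_or_ne c (n-1) with rfl | hc'
  · rw [if_pos rfl]
    have := chord hn hV hB (k + 1 + (a : ZMod (2*(n-1)))) (m := b - a) (by omega) (by omega)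
    rwa [add_assoc (k+1), cast_add_sub hn (le_of_lt hab)] at this
  · rw [if_neg hc']
    have := triple hV hh (c - a) (k + 1 + (a : ZMod (2*(n-1)))) (b - a)
      (by omega) (by omega) (by omega)
    rwa [add_assoc (k+1), cast_add_sub hn (le_of_lt hab),
      add_assoc (k+1), cast_add_sub hn (by omega : a ≤ c)] at this

end DGon2

section Arc
variable {n : ℕ} {V : ZMod (2 * (n - 1)) → ℂ}

lemma Vne0 (hn : 4 ≤ n) (hV : PosConvex V) (hsym : DSym n V) (j : ZMod (2*(n-1))) :
    V j ≠ 0 := by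
  haveI : NeZero (2*(n-1)) := ⟨by omega⟩
  intro h0
  have h1 : V (j + ((n-1 : ℕ) : ZMod (2*(n-1)))) = V j := by
    rw [hsym j, h0]; simp
  have := Vinj hV (by omega) h1
  exact add_natCast_ne j (by omega) (by omega) this

lemma pair_mem (hn : 4 ≤ n) (hV : PosConvex V) (hsym : DSym n V) (j : ZMod (2*(n-1))) :
    cLt (V j) 0 ↔ ¬ cLt (V (j + ((n-1 : ℕ) : ZMod (2*(n-1))))) 0 := by
  rw [hsym j]
  constructor
  · intro h
    have := cLt_neg h
    simp only [neg_zero] at this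
    exact cLt_asymm this
  · intro h
    have hne : -V j ≠ 0 := by
      simpa using Vne0 hn hV hsym j
    rcases cLt_total hne with h1 | h1
    · exact absurd h1 h
    · have := cLt_neg h1
      simpa using this

lemma arc (hn : 4 ≤ n) (hV : PosConvex V) (hsym : DSym n V) :
    ∃ k : ZMod (2*(n-1)), ∀ j : ZMod (2*(n-1)),
      cLt (V j) 0 ↔ ∃ i : ℕ, 1 ≤ i ∧ i ≤ n-1 ∧ j = k + (i : ZMod (2*(n-1))) := by
  haveI : NeZero (2*(n-1)) := ⟨by omega⟩
  have hh : 3 ≤ 2*(n-1) := by omega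
  -- some vertex below 0
  obtain ⟨j0, hj0⟩ : ∃ j0, cLt (V j0) 0 := by
    by_cases h : cLt (V 0) 0
    · exact ⟨0, h⟩
    · refine ⟨0 + ((n-1:ℕ) : ZMod (2*(n-1))), ?_⟩
      by_contra h2
      exact h ((pair_mem hn hV hsym 0).2 h2)
  -- transition point
  have hPex : ∃ t : ℕ, 1 ≤ t ∧ t ≤ n-1 ∧
      cLt (V (j0 + ((n-1:ℕ) : ZMod (2*(n-1))) + (t : ZMod (2*(n-1))))) 0 := by
    refine ⟨n-1, by omega, le_refl _, ?_⟩
    have e : j0 + ((n-1:ℕ) : ZMod (2*(n-1))) + ((n-1:ℕ) : ZMod (2*(n-1))) = j0 := by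
      have : ((n-1:ℕ) : ZMod (2*(n-1))) + ((n-1:ℕ) : ZMod (2*(n-1)))
          = ((2*(n-1) : ℕ) : ZMod (2*(n-1))) := by push_cast; ring
      rw [add_assoc, this, ZMod.natCast_self, add_zero]
    rw [e]; exact hj0
  classical
  obtain ⟨t0, ⟨ht01, ht0n, ht0lt⟩, ht0min⟩ :
      ∃ t, (1 ≤ t ∧ t ≤ n-1 ∧ cLt (V (j0 + ((n-1:ℕ) : ZMod (2*(n-1))) + (t : ZMod (2*(n-1))))) 0)
        ∧ ∀ m, m < t → ¬(1 ≤ m ∧ m ≤ n-1 ∧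
            cLt (V (j0 + ((n-1:ℕ) : ZMod (2*(n-1))) + (m : ZMod (2*(n-1))))) 0) :=
    ⟨Nat.find hPex, Nat.find_spec hPex, fun m hm => Nat.find_min hPex hm⟩
  set k := j0 + ((n-1:ℕ) : ZMod (2*(n-1))) + ((t0 - 1 : ℕ) : ZMod (2*(n-1))) with hkdef
  have hk1 : k + 1 = j0 + ((n-1:ℕ) : ZMod (2*(n-1))) + (t0 : ZMod (2*(n-1))) := by
    rw [hkdef]
    push_cast [Nat.cast_sub ht01]
    ring
  have hkS : ¬ cLt (V k) 0 := by
    rcases eq_or_lt_of_le ht01 with h1 | h1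
    · have h0 : t0 - 1 = 0 := by omega
      rw [hkdef, h0]
      simp only [Nat.cast_zero, add_zero]
      exact (pair_mem hn hV hsym j0).1 hj0
    · intro hc
      have h3 := ht0min (t0 - 1) (by omega)
      push_neg at h3
      exact absurd hc (h3 (by omega) (by omega))
  have hk1S : cLt (V (k + 1)) 0 := by rw [hk1]; exact ht0lt
  -- main claim: all of the arc is below 0
  have main : ∀ i : ℕ, 1 ≤ i → i ≤ n-1 → cLt (V (k + (i : ZMod (2*(n-1))))) 0 := by
    intro i hi1 hin
    rcases eq_or_lt_of_le hin with heq | hin'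
    · rw [heq]
      by_contra hc
      exact hkS ((pair_mem hn hV hsym k).2 hc)
    · rcases eq_or_lt_of_le hi1 with rfl | hi2
      · simpa using hk1S
      · -- 2 ≤ i ≤ n-2
        by_contra hc
        have hA : cLe 0 (V k) := not_cLt hkS
        have hC : cLe 0 (V (k + (i : ZMod (2*(n-1))))) := not_cLt hc
        have hD : cLt (V (k + ((n-1:ℕ) : ZMod (2*(n-1))))) 0 := by
          by_contra hc2
          exact hkS ((pair_mem hn hV hsym k).2 hc2)
        have e1 : k + 1 + ((i - 1 : ℕ) : ZMod (2*(n-1))) = k + (i : ZMod (2*(n-1))) := by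
          push_cast [Nat.cast_sub hi1]; ring
        have e2 : k + 1 + ((n - 2 : ℕ) : ZMod (2*(n-1)))
            = k + ((n-1:ℕ) : ZMod (2*(n-1))) := by
          push_cast [Nat.cast_sub (by omega : 2 ≤ n), Nat.cast_sub (by omega : 1 ≤ n)]
          ring
        have h1 : 0 < cross (V (k+1) - V k) (V (k + (i : ZMod (2*(n-1)))) - V k) := by
          have := triple hV hh i k 1 (le_refl _) hi2 (by omega)
          simpa using this
        have h2 : 0 < cross (V (k+1) - V k) (V (k + ((n-1:ℕ) : ZMod (2*(n-1)))) - V k) := by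
          have := triple hV hh (n-1) k 1 (le_refl _) (by omega) (by omega)
          simpa using this
        have h3 : 0 < cross (V (k + (i : ZMod (2*(n-1)))) - V (k+1))
            (V (k + ((n-1:ℕ) : ZMod (2*(n-1)))) - V (k+1)) := by
          have := triple hV hh (n-2) (k+1) (i-1) (by omega) (by omega) (by omega)
          rwa [e1, e2] at this
        have h4 : 0 < cross (V (k + (i : ZMod (2*(n-1)))) - V k)
            (V (k + ((n-1:ℕ) : ZMod (2*(n-1)))) - V k) :=
          triple hV hh (n-1) k i hi1 hin' (by omega)
        exact quad (V k) (V (k+1)) (V (k + (i : ZMod (2*(n-1)))))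
          (V (k + ((n-1:ℕ) : ZMod (2*(n-1))))) h1 h2 h3 h4 hA hC hk1S hD
  refine ⟨k, fun j => ⟨?_, ?_⟩⟩
  · intro hj
    set i := (j - k).val with hidef
    have hjk : j = k + (i : ZMod (2*(n-1))) := by
      rw [hidef, ZMod.natCast_val, ZMod.cast_id]; ring
    have hilt : i < 2*(n-1) := (j - k).val_lt
    refine ⟨i, ?_, ?_, hjk⟩
    · by_contra hi0
      have : i = 0 := by omega
      rw [hjk, this] at hj
      simp only [Nat.cast_zero, add_zero] at hj
      exact hkS hj
    · by_contra hin
      -- i ≥ n : j = (k + (i-(n-1))) + (n-1), and k + (i-(n-1)) is in the arc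
      have hin' : n ≤ i := by omega
      have e3 : j = (k + ((i - (n-1) : ℕ) : ZMod (2*(n-1)))) + ((n-1:ℕ) : ZMod (2*(n-1))) := by
        rw [hjk]
        push_cast [Nat.cast_sub (by omega : n-1 ≤ i)]
        ring
      have harc := main (i - (n-1)) (by omega) (by omega)
      have := (pair_mem hn hV hsym (k + ((i - (n-1) : ℕ) : ZMod (2*(n-1))))).1 harc
      rw [← e3] at this
      exact this hj
  · rintro ⟨i, hi1, hin, rfl⟩
    exact main i hi1 hin

end Arc


section Lower
variable {n : ℕ} {V : ZMod (2 * (n - 1)) → ℂ} {B : ℂ}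

lemma diag_ne_vertex {s : ℕ} {P : ℂ} (hP : P ∈ DiagGon V s) (j : ZMod (2*(n-1))) :
    P ≠ V j := by
  intro he
  have := hP j
  rw [he, sub_self] at this
  simp [cross_def] at this

lemma lower_image (hn : 4 ≤ n)
    (hV : PosConvex V) (hsym : DSym n V) (hBle : cLe (-B) B)
    (hBm : (-B) ∈ DiagGon V (n-2)) (hBp : B ∈ DiagGon V (n-2))
    {Y : ℕ → ℂ} {e : Fin (2*n) ≃ (ZMod (2*(n-1)) ⊕ Fin 2)}
    (hY1 : ∀ m : Fin (2*n), Y m.val = DPoints n V B (e m))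
    (hY2 : ∀ i j : ℕ, i < j → j < 2*n → cLe (Y i) (Y j))
    {k : ZMod (2*(n-1))}
    (hk : ∀ j, cLt (V j) 0 ↔ ∃ i : ℕ, 1 ≤ i ∧ i ≤ n-1 ∧ j = k + (i : ZMod (2*(n-1)))) :
    Y '' {i : ℕ | i < n}
      = {z | (∃ i : ℕ, 1 ≤ i ∧ i ≤ n-1 ∧ z = V (k + (i : ZMod (2*(n-1))))) ∨ z = -B} := by
  classical
  haveI : NeZero (2*(n-1)) := ⟨by omega⟩
  set inL : ℂ → Prop := fun z =>
    (∃ i : ℕ, 1 ≤ i ∧ i ≤ n-1 ∧ z = V (k + (i : ZMod (2*(n-1))))) ∨ z = -B with hinL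
  set DP : Fin (2*n) → ℂ := fun x => DPoints n V B (e x) with hDP
  have hYx : ∀ x : Fin (2*n), Y x.val = DP x := hY1
  have hVinj : Function.Injective V := Vinj hV (by omega)
  have hVneB : ∀ j, V j ≠ B := fun j he => diag_ne_vertex hBp j he.symm
  have hVneNB : ∀ j, V j ≠ -B := fun j he => diag_ne_vertex hBm j he.symm
  have hlow : ∀ i : ℕ, 1 ≤ i → i ≤ n-1 → cLt (V (k + (i : ZMod (2*(n-1))))) 0 :=
    fun i h1 h2 => (hk _).2 ⟨i, h1, h2, rfl⟩
  have hLle : ∀ z, inL z → cLe z 0 := by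
    intro z hz
    rcases hz with ⟨i, h1, h2, rfl⟩ | rfl
    · exact Or.inl (hlow i h1 h2)
    · rcases punct_split hBle with h0 | ⟨h1, _⟩
      · rw [h0]; right; simp
      · exact Or.inl h1
  have hnotL : ∀ x : Fin (2*n), ¬ inL (DP x) → ∀ z, inL z → cLt z (DP x) := by
    intro x hx z hz
    rcases hex : e x with j | b
    · have hDPx : DP x = V j := by rw [hDP]; simp only [hex, DPoints, Sum.elim_inl]
      have h0 : cLt 0 (V j) := by
        rcases cLt_total (Vne0 hn hV hsym j) with h | h
        · exfalso
          obtain ⟨i, h1, h2, he⟩ := (hk j).1 h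
          exact hx (Or.inl ⟨i, h1, h2, by rw [hDPx, he]⟩)
        · exact h
      rw [hDPx]
      exact cLe_trans_cLt (hLle z hz) h0
    · have hb : DP x = B ∨ DP x = -B := by
        rw [hDP]
        simp only [hex, DPoints, Sum.elim_inr]
        by_cases hb0 : b = 0
        · left; rw [if_pos hb0]
        · right; rw [if_neg hb0]
      rcases hb with hb | hb
      · have hBne : B ≠ -B := fun he => hx (Or.inr (hb.trans he))
        rcases punct_split hBle with h0 | ⟨_, h2⟩
        · exact absurd (by rw [h0]; simp) hBne
        · rw [hb]
          exact cLe_trans_cLt (hLle z hz) h2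
      · exact absurd (Or.inr hb) hx
  have claim1 : ∀ i : ℕ, i < n → inL (Y i) := by
    by_contra hcon
    push_neg at hcon
    obtain ⟨i0, hi0n, hi0⟩ := hcon
    have hx0 : ¬ inL (DP ⟨i0, by omega⟩) := by
      rw [← hYx ⟨i0, by omega⟩]; exact hi0
    set T : Finset (Fin (2*n)) := Finset.univ.filter (fun x => inL (DP x)) with hT
    have hTcard : n ≤ T.card := by
      set Tags : Finset (ZMod (2*(n-1)) ⊕ Fin 2) :=
        insert (Sum.inr 1) ((Finset.Icc 1 (n-1)).image
          (fun i : ℕ => Sum.inl (k + (i : ZMod (2*(n-1)))))) with hTags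
      have hTagsCard : Tags.card = n := by
        rw [hTags, Finset.card_insert_of_notMem (by simp), Finset.card_image_of_injOn]
        · rw [Nat.card_Icc]; omega
        · intro a ha b hb he
          simp only [Finset.coe_Icc, Set.mem_Icc] at ha hb
          simp only [Sum.inl.injEq] at he
          have he2 : (a : ZMod (2*(n-1))) = (b : ZMod (2*(n-1))) := by
            have := add_left_cancel he
            exact this
          exact natCast_inj_lt (by omega) (by omega) he2
      have himg : Tags.image e.symm ⊆ T := by
        intro x hx
        simp only [Finset.mem_image] at hx
        obtain ⟨t, ht, rfl⟩ := hx
        simp only [hT, Finset.mem_filter, Finset.mem_univ, true_and]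
        have hDPt : DP (e.symm t) = DPoints n V B t := by
          rw [hDP]; simp
        rw [hDPt]
        rw [hTags] at ht
        simp only [Finset.mem_insert, Finset.mem_image, Finset.mem_Icc] at ht
        rcases ht with rfl | ⟨i, ⟨h1, h2⟩, rfl⟩
        · right; simp [DPoints]
        · left; exact ⟨i, h1, h2, by simp [DPoints]⟩
      calc n = Tags.card := hTagsCard.symm
        _ = (Tags.image e.symm).card := (Finset.card_image_of_injective _ e.symm.injective).symm
        _ ≤ T.card := Finset.card_le_card himg
    have hTsub : T ⊆ Finset.univ.filter (fun x : Fin (2*n) => x.val < i0) := by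
      intro x hx
      simp only [hT, Finset.mem_filter, Finset.mem_univ, true_and] at hx
      simp only [Finset.mem_filter, Finset.mem_univ, true_and]
      by_contra hge
      push_neg at hge
      rcases eq_or_lt_of_le hge with he | hlt
      · apply hi0
        rw [show Y i0 = DP x from by rw [← hYx x, ← he]]
        exact hx
      · have hmono := hY2 i0 x.val hlt x.isLt
        rw [hYx x] at hmono
        have hzlt := hnotL ⟨i0, by omega⟩ hx0 (DP x) hx
        have : cLe (DP ⟨i0, by omega⟩) (DP x) := by
          rw [← hYx ⟨i0, by omega⟩]; exact hmono
        exact cLt_irrefl _ (cLe_trans_cLt this hzlt)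
    have hle : T.card ≤ i0 := by
      have h1 := Finset.card_le_card hTsub
      have h2 : (Finset.univ.filter (fun x : Fin (2*n) => x.val < i0)).card
          ≤ (Finset.range i0).card := by
        apply Finset.card_le_card_of_injOn (fun x => x.val)
        · intro a ha
          simp only [Finset.mem_coe, Finset.mem_filter] at ha
          simp [ha.2]
        · intro a _ b _ he
          exact Fin.val_injective he
      rw [Finset.card_range] at h2
      omega
    omega
  -- duplicate analysis
  have fin2 : ∀ b : Fin 2, b = 0 ∨ b = 1 := by decide
  have dup : ∀ x y : Fin (2*n), x ≠ y → DP x = DP y → (B = 0 ∧ DP x = 0) := by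
    intro x y hne heq
    have hexy : e x ≠ e y := fun h => hne (e.injective h)
    have heq' : DPoints n V B (e x) = DPoints n V B (e y) := heq
    rcases hex : e x with j1 | b1 <;> rcases hey : e y with j2 | b2 <;>
        rw [hex, hey] at heq' hexy <;>
        simp only [DPoints, Sum.elim_inl, Sum.elim_inr] at heq'
    · exact absurd (congrArg Sum.inl (hVinj heq')) hexy
    · exfalso
      by_cases hb0 : b2 = 0
      · rw [if_pos hb0] at heq'; exact hVneB j1 heq'
      · rw [if_neg hb0] at heq'; exact hVneNB j1 heq'
    · exfalso
      by_cases hb0 : b1 = 0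
      · rw [if_pos hb0] at heq'; exact hVneB j2 heq'.symm
      · rw [if_neg hb0] at heq'; exact hVneNB j2 heq'.symm
    · have hbne : b1 ≠ b2 := fun h => hexy (by rw [h])
      have hB0 : B = 0 := by
        rcases fin2 b1 with rfl | rfl <;> rcases fin2 b2 with rfl | rfl
        · exact absurd rfl hbne
        · rw [if_pos rfl, if_neg (by decide)] at heq'
          have h2 : (2:ℂ) * B = 0 := by linear_combination heq'
          simpa using h2
        · rw [if_neg (by decide), if_pos rfl] at heq'
          have h2 : (2:ℂ) * B = 0 := by linear_combination - heq'
          simpa using h2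
        · exact absurd rfl hbne
      refine ⟨hB0, ?_⟩
      have hrfl : DP x = DPoints n V B (e x) := rfl
      rw [hrfl, hex]
      simp only [DPoints, Sum.elim_inr]
      rw [hB0]
      by_cases hb1 : b1 = 0
      · rw [if_pos hb1]
      · rw [if_neg hb1]; simp
  -- conclusion
  apply Set.eq_of_subset_of_subset
  · rintro z ⟨i, hi, rfl⟩
    exact claim1 i hi
  · intro z hz
    -- position of z among the marked points
    have hzpos : ∃ x : Fin (2*n), DP x = z := by
      rcases hz with ⟨i, h1, h2, rfl⟩ | rfl
      · exact ⟨e.symm (Sum.inl (k + (i : ZMod (2*(n-1))))), by rw [hDP]; simp [DPoints]⟩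
      · exact ⟨e.symm (Sum.inr 1), by rw [hDP]; simp [DPoints]⟩
    obtain ⟨x, hxz⟩ := hzpos
    by_cases hxn : x.val < n
    · exact ⟨x.val, hxn, by rw [hYx x, hxz]⟩
    · push_neg at hxn
      by_cases hinj : ∀ i j : ℕ, i < j → j < n → Y i ≠ Y j
      · -- injective case: counting
        set Lf : Finset ℂ := insert (-B)
          ((Finset.Icc 1 (n-1)).image (fun i : ℕ => V (k + (i : ZMod (2*(n-1)))))) with hLf
        have hLf_mem : ∀ w, w ∈ Lf ↔ inL w := by
          intro w
          rw [hLf]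
          simp only [Finset.mem_insert, Finset.mem_image, Finset.mem_Icc, hinL]
          constructor
          · rintro (rfl | ⟨i, ⟨h1, h2⟩, rfl⟩)
            · exact Or.inr rfl
            · exact Or.inl ⟨i, h1, h2, rfl⟩
          · rintro (⟨i, h1, h2, rfl⟩ | rfl)
            · exact Or.inr ⟨i, ⟨h1, h2⟩, rfl⟩
            · exact Or.inl rfl
        have hLf_card : Lf.card = n := by
          rw [hLf, Finset.card_insert_of_notMem, Finset.card_image_of_injOn]
          · rw [Nat.card_Icc]; omega
          · intro a ha b hb he
            simp only [Finset.coe_Icc, Set.mem_Icc] at ha hb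
            have := hVinj he
            have := add_left_cancel this
            exact natCast_inj_lt (by omega) (by omega) this
          · simp only [Finset.mem_image, Finset.mem_Icc]
            rintro ⟨i, _, he⟩
            exact hVneNB _ he
        have hYinjOn : Set.InjOn Y (Finset.range n) := by
          intro a ha b hb he
          simp only [Finset.coe_range, Set.mem_Iio] at ha hb
          by_contra hne
          rcases Nat.lt_or_ge a b with h | h
          · exact hinj a b h hb he
          · exact hinj b a (by omega) ha he.symm
        have hYcard : ((Finset.range n).image Y).card = n := by
          rw [Finset.card_image_of_injOn hYinjOn, Finset.card_range]
        have hsub : (Finset.range n).image Y ⊆ Lf := by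
          intro w hw
          simp only [Finset.mem_image, Finset.mem_range] at hw
          obtain ⟨i, hi, rfl⟩ := hw
          exact (hLf_mem _).2 (claim1 i hi)
        have heq := Finset.eq_of_subset_of_card_le hsub (by omega)
        have : z ∈ (Finset.range n).image Y := by
          rw [heq]; exact (hLf_mem z).2 hz
        simp only [Finset.mem_image, Finset.mem_range] at this
        obtain ⟨i, hi, hYi⟩ := this
        exact ⟨i, hi, hYi⟩
      · -- duplicate case: B = 0
        push_neg at hinj
        obtain ⟨i, j, hij, hjn, hYij⟩ := hinj
        have hfij : (⟨i, by omega⟩ : Fin (2*n)) ≠ ⟨j, by omega⟩ := by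
          intro h
          have := Fin.mk.inj_iff.1 h
          omega
        have hdpij : DP ⟨i, by omega⟩ = DP ⟨j, by omega⟩ := by
          rw [← hYx ⟨i, by omega⟩, ← hYx ⟨j, by omega⟩]
          exact hYij
        obtain ⟨hB0, hDPi0⟩ := dup _ _ hfij hdpij
        have hYi0 : Y i = 0 := by rw [hYx ⟨i, by omega⟩]; exact hDPi0
        rcases hz with ⟨i', h1, h2, rfl⟩ | rfl
        · -- z is a vertex below 0; contradiction with Y j = 0 at position < n ≤ x
          exfalso
          have hzlt : cLt (V (k + (i' : ZMod (2*(n-1))))) 0 := hlow i' h1 h2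
          have hmono := hY2 i x.val (by omega) x.isLt
          rw [hYi0, hYx x, hxz] at hmono
          exact cLt_irrefl _ (cLe_trans_cLt hmono hzlt)
        · exact ⟨i, by simp only [Set.mem_setOf_eq]; omega, by rw [hYi0, hB0]; simp⟩

lemma range_W (hn : 4 ≤ n) (Bp : ℂ) (k : ZMod (2*(n-1))) :
    Set.range (fun x : ZMod n =>
        if x.val = n-1 then Bp else V (k + 1 + ((x.val : ℕ) : ZMod (2*(n-1)))))
      = {z | (∃ i : ℕ, 1 ≤ i ∧ i ≤ n-1 ∧ z = V (k + (i : ZMod (2*(n-1))))) ∨ z = Bp} := by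
  haveI : NeZero n := ⟨by omega⟩
  haveI : NeZero (2*(n-1)) := ⟨by omega⟩
  ext z
  simp only [Set.mem_range, Set.mem_setOf_eq]
  constructor
  · rintro ⟨x, rfl⟩
    by_cases hx : x.val = n-1
    · rw [if_pos hx]; right; rfl
    · rw [if_neg hx]
      left
      have hlt := x.val_lt
      refine ⟨x.val + 1, by omega, by omega, ?_⟩
      congr 1
      push_cast
      ring
  · intro h
    rcases h with ⟨i, h1, h2, rfl⟩ | rfl
    · refine ⟨((i - 1 : ℕ) : ZMod n), ?_⟩
      have hval : (((i-1:ℕ) : ZMod n)).val = i - 1 := ZMod.val_cast_of_lt (by omega)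
      rw [hval, if_neg (by omega : ¬ (i - 1 = n-1))]
      congr 1
      push_cast [Nat.cast_sub h1]
      ring
    · refine ⟨((n-1 : ℕ) : ZMod n), ?_⟩
      have hval : (((n-1:ℕ) : ZMod n)).val = n - 1 := ZMod.val_cast_of_lt (by omega)
      rw [hval, if_pos rfl]

end Lower





/-- Lemma 4.5: for a stable `2(n-1)`-gon of type `D_n` with its increasing enumeration
`Y 0, …, Y (2n-1)` of the `2n` marked points (so `Y 0, …, Y (n-1)` are the points
`Y_{-n}, …, Y_{-1}` of the paper), (i) the `n` points `Y_{-n}, …, Y_{-1}` form, in a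
suitable cyclic order, a positively convex `n`-gon `∇ₙ⁻`, and (ii) replacing `B₋ = -B`
by `B₊ = B` among them also yields a positively convex `n`-gon `∇ₙ⁺`. -/
theorem lemma_4_5 (n : ℕ) (hn : 4 ≤ n) (V : ZMod (2 * (n - 1)) → ℂ) (B : ℂ)
    (hst : IsStableDGon n V B) (Y : ℕ → ℂ)
    (e : Fin (2 * n) ≃ (ZMod (2 * (n - 1)) ⊕ Fin 2)) (henum : DEnum n V B Y e) :
    (∃ U : ZMod n → ℂ, PosConvex U ∧
      Set.range U = Y '' {i : ℕ | i < n}) ∧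
    (∃ U : ZMod n → ℂ, PosConvex U ∧
      Set.range U = (Y '' {i : ℕ | i < n} \ {-B}) ∪ {B}) := by
  obtain ⟨hV, hsym, hBle, hBm, hBp⟩ := hst
  obtain ⟨hY1, hY2⟩ := henum
  haveI : NeZero (2*(n-1)) := ⟨by omega⟩
  obtain ⟨k, hk⟩ := arc hn hV hsym
  have himg := lower_image hn hV hsym hBle hBm hBp hY1 hY2 hk
  have hVneNB : ∀ j, V j ≠ -B := fun j he => diag_ne_vertex hBm j he.symm
  constructor
  · refine ⟨fun x : ZMod n =>
      if x.val = n-1 then -B else V (k + 1 + ((x.val : ℕ) : ZMod (2*(n-1)))), ?_, ?_⟩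
    · exact posConvex_of_triples (by omega) _ (nabla_triples hn hV hBm k)
    · rw [himg]
      exact range_W hn (-B) k
  · refine ⟨fun x : ZMod n =>
      if x.val = n-1 then B else V (k + 1 + ((x.val : ℕ) : ZMod (2*(n-1)))), ?_, ?_⟩
    · exact posConvex_of_triples (by omega) _ (nabla_triples hn hV hBp k)
    · rw [himg, range_W hn B k]
      ext z
      simp only [Set.mem_setOf_eq, Set.mem_union, Set.mem_diff, Set.mem_singleton_iff]
      constructor
      · rintro (⟨i, h1, h2, rfl⟩ | rfl)
        · exact Or.inl ⟨Or.inl ⟨i, h1, h2, rfl⟩, hVneNB _⟩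
        · exact Or.inr rfl
      · rintro (⟨hL, hne⟩ | rfl)
        · rcases hL with ⟨i, h1, h2, rfl⟩ | rfl
          · exact Or.inl ⟨i, h1, h2, rfl⟩
          · exact absurd rfl hne
        · exact Or.inr rfl
end
end

section
/- (Claim in the proof of Lemma 4.5.) Let n ≥ 4 and let (V₁, …, V_{2(n−1)}) be a positively convex 2(n−1)-gon in ℂ that is centrally symmetric about 0, i.e. V_{j+n−1} = −V_j for all j (indices mod 2(n−1)). Then for every j, the level-(n−2) diagonal-gon is contained in the convex hull of the four points V_j, V_{j+1}, −V_j, −V_{j+1} (the parallelogram with vertices V_j, V_{j+1}, V_{j+n−1}, V_{j+n}). -/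
noncomputable section

lemma cross_plucker (p q r u : ℂ) :
    cross p q * cross r u = cross u q * cross r p - cross u p * cross r q := by
  simp only [cross_def, Complex.sub_re, Complex.sub_im, Complex.add_re, Complex.add_im,
    Complex.neg_re, Complex.neg_im]
  ring

lemma edge_nonneg (n : ℕ) (hn : 4 ≤ n) (V : ZMod (2 * (n - 1)) → ℂ)
    (hpc : PosConvex V) (hsym : DSym n V) (P : ℂ)
    (hP : ∀ k : ZMod (2 * (n - 1)),
      0 < cross (V (k + ((n - 2 : ℕ) : ZMod (2 * (n - 1)))) - V k) (P - V k))
    (j : ZMod (2 * (n - 1))) : 0 ≤ cross (V (j + 1) - V j) (P - V j) := by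
  haveI : NeZero (2 * (n - 1)) := ⟨by omega⟩
  have hcast : ∀ t : ℕ, 0 < t → t < 2 * (n - 1) → ((t : ZMod (2 * (n - 1))) ≠ 0) := by
    intro t h1 h2 hC
    rw [ZMod.natCast_eq_zero_iff] at hC
    exact absurd (Nat.le_of_dvd h1 hC) (by omega)
  set s1 : ZMod (2 * (n - 1)) := ((n - 1 : ℕ) : ZMod (2 * (n - 1))) with hs1
  set s2 : ZMod (2 * (n - 1)) := ((n - 2 : ℕ) : ZMod (2 * (n - 1))) with hs2
  have hs21 : s2 + 1 = s1 := by
    have h := congrArg (fun t : ℕ => (t : ZMod (2 * (n - 1)))) (show (n - 2) + 1 = n - 1 by omega)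
    simpa using h
  have hs32 : ((n - 3 : ℕ) : ZMod (2 * (n - 1))) + 1 = s2 := by
    have h := congrArg (fun t : ℕ => (t : ZMod (2 * (n - 1)))) (show (n - 3) + 1 = n - 2 by omega)
    simpa using h
  have hss : s1 + s1 = 0 := by
    have h := congrArg (fun t : ℕ => (t : ZMod (2 * (n - 1)))) (show (n - 1) + (n - 1) = 2 * (n - 1) by omega)
    simpa [ZMod.natCast_self] using h
  have hns1 : ((n : ℕ) : ZMod (2 * (n - 1))) = s1 + 1 := by
    have h := congrArg (fun t : ℕ => (t : ZMod (2 * (n - 1)))) (show (n - 1) + 1 = n by omega)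
    simpa using h.symm
  have hns2 : ((n + 1 : ℕ) : ZMod (2 * (n - 1))) = s1 + 1 + 1 := by
    have h := congrArg (fun t : ℕ => (t : ZMod (2 * (n - 1)))) (show (n - 1) + 1 + 1 = n + 1 by omega)
    simpa using h.symm
  -- hD : 0 < cross (V j) (V (j+1))
  have h1 := hpc (j + 1) (j + s1)
    (by rw [add_sub_cancel_right]; intro h; exact hcast (n - 1) (by omega) (by omega)
          (by linear_combination h))
    (by intro h
        exact hcast (n - 2) (by omega) (by omega) (by linear_combination h + hs21))
  rw [add_sub_cancel_right, hsym j] at h1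
  have hD : 0 < cross (V j) (V (j + 1)) := by
    have e : cross (V (j + 1) - V j) (-V j - V j) = 2 * cross (V j) (V (j + 1)) := by
      simp only [cross_def, Complex.sub_re, Complex.sub_im, Complex.neg_re, Complex.neg_im]; ring
    linarith [e ▸ h1]
  -- h2 : 0 < cross (V (j+1) - V j) (-V (j-1) - V j)
  have hWid : j + s2 = j - 1 + s1 := by linear_combination hs21
  have h2 := hpc (j + 1) (j + s2)
    (by rw [add_sub_cancel_right]; intro h
        exact hcast (n - 2) (by omega) (by omega) (by linear_combination h))
    (by intro h
        exact hcast (n - 3) (by omega) (by omega) (by linear_combination h + hs32))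
  rw [add_sub_cancel_right, hWid, hsym (j - 1)] at h2
  -- h3 : 0 < cross (V j - V (j-1)) (-V (j+1) - V (j-1))
  have h3 := hpc j (j + 1 + s1)
    (by intro h
        exact hcast (n + 1) (by omega) (by omega) (by linear_combination h + hns2))
    (by intro h
        exact hcast n (by omega) (by omega) (by linear_combination h + hns1))
  rw [hsym (j + 1)] at h3
  -- hr : constraint at j
  have hr := hP j
  rw [hWid, hsym (j - 1)] at hr
  -- hp : constraint at j+1+s1
  have hp0 := hP (j + 1 + s1)
  rw [show j + 1 + s1 + s2 = j by linear_combination hs21 + hss, hsym (j + 1)] at hp0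
  have hp : 0 < cross (V j + V (j + 1)) (P - V j) := by
    have e : cross (V j - -V (j + 1)) (P - -V (j + 1))
        = cross (V j + V (j + 1)) (P - V j) := by
      simp only [cross_def, Complex.sub_re, Complex.sub_im, Complex.add_re, Complex.add_im,
        Complex.neg_re, Complex.neg_im]; ring
    linarith [e ▸ hp0]
  by_contra hqc
  push_neg at hqc
  have hpq : 0 < cross (V j + V (j + 1)) (V (j + 1) - V j) := by
    have e : cross (V j + V (j + 1)) (V (j + 1) - V j) = 2 * cross (V j) (V (j + 1)) := by
      simp only [cross_def, Complex.sub_re, Complex.sub_im, Complex.add_re, Complex.add_im]; ring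
    linarith [e]
  have hrp : cross (-V (j - 1) - V j) (V j + V (j + 1)) < 0 := by
    have e : cross (-V (j - 1) - V j) (V j + V (j + 1))
        = -(cross (V j - V (j - 1)) (-V (j + 1) - V (j - 1))) - 2 * cross (V j) (V (j + 1)) := by
      simp only [cross_def, Complex.sub_re, Complex.sub_im, Complex.add_re, Complex.add_im,
        Complex.neg_re, Complex.neg_im]; ring
    linarith [e]
  have hrq : cross (-V (j - 1) - V j) (V (j + 1) - V j) < 0 := by
    have e : cross (-V (j - 1) - V j) (V (j + 1) - V j)
        = -(cross (V (j + 1) - V j) (-V (j - 1) - V j)) := by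
      simp only [cross_def, Complex.sub_re, Complex.sub_im, Complex.neg_re, Complex.neg_im]; ring
    linarith [e]
  have X : 0 < cross (V j + V (j + 1)) (V (j + 1) - V j)
      * cross (-V (j - 1) - V j) (P - V j) := mul_pos hpq hr
  have t1 : cross (P - V j) (V (j + 1) - V j) * cross (-V (j - 1) - V j) (V j + V (j + 1)) < 0 := by
    apply mul_neg_of_pos_of_neg _ hrp
    have e : cross (P - V j) (V (j + 1) - V j) = -(cross (V (j + 1) - V j) (P - V j)) := by
      simp only [cross_def, Complex.sub_re, Complex.sub_im]; ring
    linarith [e]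
  have t2 : 0 < cross (P - V j) (V j + V (j + 1)) * cross (-V (j - 1) - V j) (V (j + 1) - V j) := by
    apply mul_pos_of_neg_of_neg _ hrq
    have e : cross (P - V j) (V j + V (j + 1)) = -(cross (V j + V (j + 1)) (P - V j)) := by
      simp only [cross_def, Complex.sub_re, Complex.sub_im, Complex.add_re, Complex.add_im]; ring
    linarith [e]
  have plk := cross_plucker (V j + V (j + 1)) (V (j + 1) - V j) (-V (j - 1) - V j) (P - V j)
  linarith

/-- (Claim in the proof of Lemma 4.5.) For a centrally symmetric positively convex
`2(n-1)`-gon, the level-`(n-2)` diagonal-gon is contained in each parallelogram with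
vertices `V j, V (j+1), -V j, -(V (j+1))`. -/
theorem diagGon_subset_parallelogram (n : ℕ) (hn : 4 ≤ n)
    (V : ZMod (2 * (n - 1)) → ℂ) (hpc : PosConvex V) (hsym : DSym n V) :
    ∀ j : ZMod (2 * (n - 1)),
      DiagGon V (n - 2) ⊆
        convexHull ℝ ({V j, V (j + 1), -V j, -(V (j + 1))} : Set ℂ) := by
  intro j P hPmem
  have hP : ∀ k : ZMod (2 * (n - 1)),
      0 < cross (V (k + ((n - 2 : ℕ) : ZMod (2 * (n - 1)))) - V k) (P - V k) := hPmem
  haveI : NeZero (2 * (n - 1)) := ⟨by omega⟩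
  have hcast : ∀ t : ℕ, 0 < t → t < 2 * (n - 1) → ((t : ZMod (2 * (n - 1))) ≠ 0) := by
    intro t h1 h2 hC
    rw [ZMod.natCast_eq_zero_iff] at hC
    exact absurd (Nat.le_of_dvd h1 hC) (by omega)
  set s1 : ZMod (2 * (n - 1)) := ((n - 1 : ℕ) : ZMod (2 * (n - 1))) with hs1
  set s2 : ZMod (2 * (n - 1)) := ((n - 2 : ℕ) : ZMod (2 * (n - 1))) with hs2
  have hs21 : s2 + 1 = s1 := by
    have h := congrArg (fun t : ℕ => (t : ZMod (2 * (n - 1)))) (show (n - 2) + 1 = n - 1 by omega)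
    simpa using h
  have hss : s1 + s1 = 0 := by
    have h := congrArg (fun t : ℕ => (t : ZMod (2 * (n - 1)))) (show (n - 1) + (n - 1) = 2 * (n - 1) by omega)
    simpa [ZMod.natCast_self] using h
  -- the four half-plane inequalities
  have c1 : 0 ≤ cross (V (j + 1) - V j) (P - V j) := edge_nonneg n hn V hpc hsym P hP j
  have c3 := edge_nonneg n hn V hpc hsym P hP (j + s1)
  rw [show j + s1 + 1 = j + 1 + s1 by ring, hsym (j + 1), hsym j] at c3
  have c2 := hP (j + 1)
  rw [show j + 1 + s2 = j + s1 by linear_combination hs21, hsym j] at c2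
  have c4 := hP (j + 1 + s1)
  rw [show j + 1 + s1 + s2 = j by linear_combination hs21 + hss, hsym (j + 1)] at c4
  have h1 := hpc (j + 1) (j + s1)
    (by rw [add_sub_cancel_right]; intro h; exact hcast (n - 1) (by omega) (by omega)
          (by linear_combination h))
    (by intro h
        exact hcast (n - 2) (by omega) (by omega) (by linear_combination h + hs21))
  rw [add_sub_cancel_right, hsym j] at h1
  have hD : 0 < cross (V j) (V (j + 1)) := by
    have e : cross (V (j + 1) - V j) (-V j - V j) = 2 * cross (V j) (V (j + 1)) := by
      simp only [cross_def, Complex.sub_re, Complex.sub_im, Complex.neg_re, Complex.neg_im]; ring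
    linarith [e ▸ h1]
  -- numeric reformulation
  set a : ℝ := cross P (V (j + 1)) with hadef
  set b : ℝ := cross (V j) P with hbdef
  set D : ℝ := cross (V j) (V (j + 1)) with hDdef
  have hc1 : 0 ≤ D - a - b := by
    have e : cross (V (j + 1) - V j) (P - V j) = D - a - b := by
      rw [hadef, hbdef, hDdef]
      simp only [cross_def, Complex.sub_re, Complex.sub_im]; ring
    linarith [e ▸ c1]
  have hc3 : 0 ≤ D + a + b := by
    have e : cross (-V (j + 1) - -V j) (P - -V j) = D + a + b := by
      rw [hadef, hbdef, hDdef]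
      simp only [cross_def, Complex.sub_re, Complex.sub_im, Complex.neg_re, Complex.neg_im]; ring
    linarith [e ▸ c3]
  have hc2 : 0 < D + a - b := by
    have e : cross (-V j - V (j + 1)) (P - V (j + 1)) = D + a - b := by
      rw [hadef, hbdef, hDdef]
      simp only [cross_def, Complex.sub_re, Complex.sub_im, Complex.neg_re, Complex.neg_im]; ring
    linarith [e ▸ c2]
  have hc4 : 0 < D - a + b := by
    have e : cross (V j - -V (j + 1)) (P - -V (j + 1)) = D - a + b := by
      rw [hadef, hbdef, hDdef]
      simp only [cross_def, Complex.sub_re, Complex.sub_im, Complex.neg_re, Complex.neg_im]; ring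
    linarith [e ▸ c4]
  have hDpos : 0 < D := hD
  have h4D : (4 * D) ≠ 0 := by positivity
  -- Cramer identities
  have cram_re : D * P.re = a * (V j).re + b * (V (j + 1)).re := by
    rw [hadef, hbdef, hDdef]; simp only [cross_def]; ring
  have cram_im : D * P.im = a * (V j).im + b * (V (j + 1)).im := by
    rw [hadef, hbdef, hDdef]; simp only [cross_def]; ring
  -- weights
  set f : Fin 4 → ℝ :=
    ![(D + 2 * a + |a| - |b|) / (4 * D), (D + 2 * b - |a| + |b|) / (4 * D),
      (D - 2 * a + |a| - |b|) / (4 * D), (D - 2 * b - |a| + |b|) / (4 * D)] with hfdef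
  set g : Fin 4 → ℂ := ![V j, V (j + 1), -V j, -(V (j + 1))] with hgdef
  have hf : ∀ i ∈ Finset.univ, 0 ≤ f i := by
    intro i _
    fin_cases i <;>
      · simp only [hfdef, Matrix.cons_val_zero, Matrix.cons_val_one, Matrix.head_cons,
          Matrix.cons_val_two, Matrix.tail_cons, Matrix.cons_val_three]
        apply div_nonneg _ (by linarith)
        rcases abs_cases a with ⟨h, _⟩ | ⟨h, _⟩ <;> rcases abs_cases b with ⟨h', _⟩ | ⟨h', _⟩ <;>
          linarith
  have hfs : ∑ i ∈ Finset.univ, f i = 1 := by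
    rw [Fin.sum_univ_four]
    simp only [hfdef, Matrix.cons_val_zero, Matrix.cons_val_one, Matrix.head_cons,
      Matrix.cons_val_two, Matrix.tail_cons, Matrix.cons_val_three]
    rw [← add_div, ← add_div, ← add_div, div_eq_one_iff_eq h4D]
    ring
  have hg : ∀ i ∈ Finset.univ, g i ∈ convexHull ℝ ({V j, V (j + 1), -V j, -(V (j + 1))} : Set ℂ) := by
    intro i _
    apply subset_convexHull ℝ ({V j, V (j + 1), -V j, -(V (j + 1))} : Set ℂ)
    fin_cases i <;> simp [hgdef]
  have hmem := (convex_convexHull ℝ ({V j, V (j + 1), -V j, -(V (j + 1))} : Set ℂ)).sum_mem hf hfs hg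
  have key2 : (4 * D) • P = (D + 2 * a + |a| - |b|) • V j + (D + 2 * b - |a| + |b|) • V (j + 1)
      + (D - 2 * a + |a| - |b|) • (-V j) + (D - 2 * b - |a| + |b|) • (-(V (j + 1))) := by
    apply Complex.ext
    · simp only [Complex.add_re, Complex.smul_re, Complex.neg_re, smul_eq_mul]
      linear_combination 4 * cram_re
    · simp only [Complex.add_im, Complex.smul_im, Complex.neg_im, smul_eq_mul]
      linear_combination 4 * cram_im
  have key : ∑ i ∈ Finset.univ, f i • g i = P := by
    rw [Fin.sum_univ_four]
    simp only [hfdef, hgdef, Matrix.cons_val_zero, Matrix.cons_val_one, Matrix.head_cons,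
      Matrix.cons_val_two, Matrix.tail_cons, Matrix.cons_val_three]
    rw [div_eq_inv_mul, div_eq_inv_mul, div_eq_inv_mul, div_eq_inv_mul, mul_smul, mul_smul,
      mul_smul, mul_smul, ← smul_add, ← smul_add, ← smul_add, ← key2, smul_smul,
      inv_mul_cancel₀ h4D, one_smul]
  rw [← key]
  exact hmem
end
end
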